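/- arXiv:1006.5620 — 6 statements merged into one kernel-verified Lean document; each statement's English description precedes it below -/
import Mathlib

section
/- Fix an odd positive integer w and m ≥ 0. For j = 0,…,m set k_j = j + (w−1)/2. The (m+1)×(m+1) matrix M with entries M_{i,j} = (2k_j+i+1)!/(2k_j+i+1−2j)! + (i+1)!/(i+1−2j)! for 0 ≤ i,j ≤ m (with the convention that n!/(n−r)! = 0 if r > n) is invertible. -/
open Polynomial Finset

private lemma cast_descFactorial_aux (n k : ℕ) :
    ((n.descFactorial k : ℝ)) = ∏ t ∈ Finset.range k, ((n : ℝ) - t) := by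
  induction k with
  | zero => simp
  | succ k ih =>
    rw [Nat.descFactorial_succ, Finset.prod_range_succ, ← ih]
    rcases lt_or_ge k n with h | h
    · rw [Nat.cast_mul, Nat.cast_sub h.le]
      ring
    · rw [Nat.sub_eq_zero_of_le h]
      rcases eq_or_lt_of_le h with rfl | h'
      · simp [mul_comm]
      · rw [Nat.descFactorial_eq_zero_iff_lt.mpr h']
        simp

namespace LambdaAux

noncomputable def A (w j : ℕ) : ℝ[X] := ∏ t ∈ Finset.range (2 * j), (X + C ((w : ℝ) + 1 + t))

noncomputable def B (j : ℕ) : ℝ[X] := ∏ t ∈ Finset.range (2 * j), (X + C (1 - (t : ℝ)))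

noncomputable def F (w j : ℕ) : ℝ[X] := A w j + B j

lemma monic_A (w j : ℕ) : (A w j).Monic :=
  monic_prod_of_monic _ _ fun t _ => monic_X_add_C _

lemma monic_B (j : ℕ) : (B j).Monic :=
  monic_prod_of_monic _ _ fun t _ => monic_X_add_C _

lemma natDegree_A (w j : ℕ) : (A w j).natDegree = 2 * j := by
  rw [A, natDegree_prod_of_monic _ _ fun t _ => monic_X_add_C _]
  simp only [natDegree_X_add_C, Finset.sum_const, Finset.card_range, smul_eq_mul, mul_one]

lemma natDegree_B (j : ℕ) : (B j).natDegree = 2 * j := by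
  rw [B, natDegree_prod_of_monic _ _ fun t _ => monic_X_add_C _]
  simp only [natDegree_X_add_C, Finset.sum_const, Finset.card_range, smul_eq_mul, mul_one]

lemma natDegree_F_le (w j : ℕ) : (F w j).natDegree ≤ 2 * j := by
  refine (natDegree_add_le _ _).trans ?_
  rw [natDegree_A, natDegree_B]
  simp

lemma coeff_F_self (w j : ℕ) : (F w j).coeff (2 * j) = 2 := by
  rw [F, coeff_add]
  have hA : (A w j).coeff (2 * j) = 1 := by
    have := (monic_A w j).coeff_natDegree
    rwa [natDegree_A] at this
  have hB : (B j).coeff (2 * j) = 1 := by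
    have := (monic_B j).coeff_natDegree
    rwa [natDegree_B] at this
  rw [hA, hB]; norm_num

lemma coeff_F_lt (w j j' : ℕ) (h : j' < j) : (F w j').coeff (2 * j) = 0 :=
  coeff_eq_zero_of_natDegree_lt (lt_of_le_of_lt (natDegree_F_le w j') (by omega))

lemma F_comp (w j : ℕ) : (F w j).comp (C (-((w : ℝ) + 2)) - X) = F w j := by
  rw [F, add_comp, A, B, Polynomial.prod_comp, Polynomial.prod_comp]
  have h1 : ∀ t ∈ Finset.range (2 * j),
      (X + C ((w : ℝ) + 1 + t)).comp (C (-((w : ℝ) + 2)) - X)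
        = (-1) * (X + C (1 - (t : ℝ))) := by
    intro t _
    simp only [add_comp, X_comp, C_comp]
    simp only [map_neg, map_add, map_sub, map_one, map_ofNat]
    ring
  have h2 : ∀ t ∈ Finset.range (2 * j),
      (X + C (1 - (t : ℝ))).comp (C (-((w : ℝ) + 2)) - X)
        = (-1) * (X + C ((w : ℝ) + 1 + t)) := by
    intro t _
    simp only [add_comp, X_comp, C_comp]
    simp only [map_neg, map_add, map_sub, map_one, map_ofNat]
    ring
  rw [Finset.prod_congr rfl h1, Finset.prod_congr rfl h2, Finset.prod_mul_distrib,
    Finset.prod_mul_distrib, Finset.prod_const, Finset.card_range, pow_mul]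
  norm_num [add_comm]

lemma eval_A (w j i : ℕ) :
    (A w j).eval (i : ℝ) = (((i + w + 2 * j).descFactorial (2 * j) : ℕ) : ℝ) := by
  rw [A, eval_prod, cast_descFactorial_aux, ← Finset.prod_range_reflect]
  refine Finset.prod_congr rfl fun t ht => ?_
  simp only [Finset.mem_range] at ht
  have h1 : ((2 * j - 1 - t : ℕ) : ℝ) = 2 * j - 1 - t := by
    push_cast [Nat.cast_sub (by omega : t ≤ 2 * j - 1), Nat.cast_sub (by omega : 1 ≤ 2 * j)]
    ring
  simp only [eval_add, eval_X, eval_C, h1]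
  push_cast
  ring

lemma eval_B (j i : ℕ) :
    (B j).eval (i : ℝ) = (((i + 1).descFactorial (2 * j) : ℕ) : ℝ) := by
  rw [B, eval_prod, cast_descFactorial_aux]
  refine Finset.prod_congr rfl fun t _ => ?_
  simp only [eval_add, eval_X, eval_C]
  push_cast
  ring

end LambdaAux

/-- Fix an odd positive integer `w` and `m ≥ 0`, and set `k_j = j + (w-1)/2` for
`0 ≤ j ≤ m`. The `(m+1) × (m+1)` matrix with entries
`M i j = (2k_j+i+1)!/(2k_j+i+1−2j)! + (i+1)!/(i+1−2j)!` (falling factorials, taken to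
be `0` when the lower argument would be negative, i.e. `Nat.descFactorial`) is
invertible. -/
theorem lambda_matrix_invertible (w m : ℕ) (hw : Odd w) (hpos : 0 < w) :
    (Matrix.of fun i j : Fin (m + 1) =>
        (((2 * ((j : ℕ) + (w - 1) / 2) + (i : ℕ) + 1).descFactorial (2 * (j : ℕ)) : ℝ) +
          (((i : ℕ) + 1).descFactorial (2 * (j : ℕ)) : ℝ))).det ≠ 0 := by
  open LambdaAux in
  intro hdet
  obtain ⟨v, hv, hMv⟩ := Matrix.exists_mulVec_eq_zero_iff.mpr hdet
  obtain ⟨a, ha⟩ := hw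
  set c : ℝ := -((w : ℝ) + 2) with hc
  set p : ℝ[X] := ∑ j : Fin (m + 1), C (v j) * F w (j : ℕ) with hp
  -- matrix entries are evaluations of F
  have hidx : ∀ i j : ℕ, 2 * (j + (w - 1) / 2) + i + 1 = i + w + 2 * j := by
    intro i j; omega
  have hentry : ∀ i j : Fin (m + 1),
      (F w (j : ℕ)).eval ((i : ℕ) : ℝ)
        = ((2 * ((j : ℕ) + (w - 1) / 2) + (i : ℕ) + 1).descFactorial (2 * (j : ℕ)) : ℝ) +
            (((i : ℕ) + 1).descFactorial (2 * (j : ℕ)) : ℝ) := by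
    intro i j
    rw [F, eval_add, eval_A, eval_B, hidx]
  -- the natural numbers 0..m are roots of p
  have hroot1 : ∀ i : Fin (m + 1), p.eval ((i : ℕ) : ℝ) = 0 := by
    intro i
    have h := congrFun hMv i
    simp only [Matrix.mulVec, dotProduct, Matrix.of_apply, Pi.zero_apply] at h
    rw [hp, eval_finset_sum]
    rw [← h]
    refine Finset.sum_congr rfl fun j _ => ?_
    rw [eval_mul, eval_C, hentry i j]
    ring
  -- symmetry gives more roots
  have hcomp : p.comp (C c - X) = p := by
    rw [hp, Polynomial.sum_comp]
    refine Finset.sum_congr rfl fun j _ => ?_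
    rw [mul_comp, C_comp, F_comp]
  have hroot2 : ∀ i : Fin (m + 1), p.eval (c - (i : ℕ)) = 0 := by
    intro i
    have : p.eval ((C c - X).eval ((i : ℕ) : ℝ)) = 0 := by
      rw [← eval_comp, hcomp]; exact hroot1 i
    simpa using this
  -- the root set
  set S : Finset ℝ :=
    (Finset.range (m + 1)).image (fun i : ℕ => (i : ℝ)) ∪
      (Finset.range (m + 1)).image (fun i : ℕ => c - i) with hS
  have hneg : ∀ x ∈ (Finset.range (m + 1)).image (fun i : ℕ => c - i), x < 0 := by
    intro x hx
    simp only [Finset.mem_image, Finset.mem_range] at hx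
    obtain ⟨i, _, rfl⟩ := hx
    have h1 : (0 : ℝ) ≤ (i : ℝ) := Nat.cast_nonneg i
    have h2 : (1 : ℝ) ≤ (w : ℝ) := by exact_mod_cast hpos
    rw [hc]; linarith
  have hdisj : Disjoint ((Finset.range (m + 1)).image (fun i : ℕ => (i : ℝ)))
      ((Finset.range (m + 1)).image (fun i : ℕ => c - i)) := by
    rw [Finset.disjoint_left]
    intro x hx hx'
    simp only [Finset.mem_image, Finset.mem_range] at hx
    obtain ⟨i, _, rfl⟩ := hx
    exact absurd (hneg _ hx') (not_lt.mpr (Nat.cast_nonneg i))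
  have hcard : S.card = 2 * m + 2 := by
    rw [hS, Finset.card_union_of_disjoint hdisj,
      Finset.card_image_of_injective _ Nat.cast_injective,
      Finset.card_image_of_injective _ ?_, Finset.card_range]
    · omega
    · intro x y hxy
      simp only at hxy
      have : (x : ℝ) = y := by linarith
      exact_mod_cast this
  have hdeg : p.natDegree ≤ 2 * m := by
    rw [hp]
    refine natDegree_sum_le_of_forall_le _ _ fun j _ => ?_
    refine (natDegree_mul_le).trans ?_
    have := natDegree_F_le w (j : ℕ)
    have hj : (j : ℕ) ≤ m := Nat.lt_succ_iff.mp j.isLt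
    simp only [natDegree_C, zero_add]
    omega
  have hp0 : p = 0 := by
    refine eq_zero_of_natDegree_lt_card_of_eval_eq_zero' p S ?_ ?_
    · intro x hx
      rw [hS, Finset.mem_union] at hx
      rcases hx with hx | hx <;>
        · simp only [Finset.mem_image, Finset.mem_range] at hx
          obtain ⟨i, hi, rfl⟩ := hx
          first
            | exact hroot1 ⟨i, hi⟩
            | exact hroot2 ⟨i, hi⟩
    · rw [hcard]; omega
  -- derive v = 0 by downward induction on the index
  have step : ∀ j : Fin (m + 1), (∀ j' : Fin (m + 1), (j : ℕ) < (j' : ℕ) → v j' = 0) →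
      v j = 0 := by
    intro j hjs
    have hcoeff : p.coeff (2 * (j : ℕ)) = 2 * v j := by
      rw [hp, finset_sum_coeff]
      rw [Finset.sum_eq_single j]
      · rw [coeff_C_mul, coeff_F_self]; ring
      · intro j' _ hne
        rcases lt_or_gt_of_ne (fun h : (j' : ℕ) = (j : ℕ) => hne (Fin.ext h)) with h | h
        · rw [coeff_C_mul, coeff_F_lt w _ _ h, mul_zero]
        · rw [hjs j' h, map_zero, zero_mul, coeff_zero]
      · intro h; exact absurd (Finset.mem_univ j) h
    rw [hp0] at hcoeff
    simp only [coeff_zero] at hcoeff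
    linarith [hcoeff.symm]
  have hall : ∀ k : ℕ, ∀ j : Fin (m + 1), m - (j : ℕ) ≤ k → v j = 0 := by
    intro k
    induction k using Nat.strong_induction_on with
    | _ k ih =>
      intro j hj
      refine step j fun j' hj' => ?_
      have hj'le : (j' : ℕ) ≤ m := Nat.lt_succ_iff.mp j'.isLt
      exact ih (m - (j' : ℕ)) (by omega) j' le_rfl
  exact hv (funext fun j => hall (m - (j : ℕ)) j le_rfl)
end

section
/- Let φ: W → W be any linear map of weight w ≥ 1 on the vector space W with basis {α_j : j ≥ 0}, given by φ(α_j) = c_j α_{j+w} for scalars c_j. Then for each m ≥ 0, the restriction of φ to the subspace W_m spanned by {α_0,…,α_m} can be expressed uniquely as a linear combination of the restrictions to W_m of the maps ψ_k defined by ψ_k(α_j) = λ_{0,2k,j,2k−w+1} α_{j+w}, where k ranges over integers with 0 ≤ 2k+1−w ≤ 2m+1. -/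
/-- `λ_{a,b,c,m}` with falling factorial quotients interpreted as `0` when the lower
argument would be negative. -/
noncomputable def lam (a b c m : ℕ) : ℂ :=
  (-1 : ℂ) ^ b * ((b + c + 1).descFactorial m : ℂ) +
    (-1 : ℂ) ^ a * ((a + c + 1).descFactorial m : ℂ)

open Polynomial Finset

lemma descFactorial_cast_complex (a n : ℕ) :
    ((a.descFactorial n : ℕ) : ℂ) = ∏ i ∈ Finset.range n, ((a : ℂ) - i) := by
  rcases le_or_gt n a with h | h
  · rw [Nat.descFactorial_eq_prod_range, Nat.cast_prod]
    refine Finset.prod_congr rfl fun i hi => ?_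
    rw [Finset.mem_range] at hi
    rw [Nat.cast_sub (by omega)]
  · rw [Nat.descFactorial_eq_zero_iff_lt.mpr h, Nat.cast_zero]
    exact (Finset.prod_eq_zero (Finset.mem_range.mpr h) (by simp)).symm

/-- The polynomial whose value at `j` is `lam 0 (2k) j n`. -/
noncomputable def Rpoly (k n : ℕ) : Polynomial ℂ :=
  (∏ i ∈ Finset.range n, (X + C ((2 * k + 1 : ℂ) - i))) +
  (∏ i ∈ Finset.range n, (X + C ((1 : ℂ) - i)))

lemma lam_eval (k j n : ℕ) :
    lam 0 (2 * k) j n = (Rpoly k n).eval (j : ℂ) := by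
  unfold lam Rpoly
  simp only [eval_add, eval_prod, eval_X, eval_C]
  rw [descFactorial_cast_complex, descFactorial_cast_complex]
  have h1 : ∀ i ∈ Finset.range n,
      ((((2 * k) + j + 1 : ℕ) : ℂ) - i) = ((j : ℂ) + ((2 * k + 1 : ℂ) - i)) := by
    intro i _; push_cast; ring
  have h2 : ∀ i ∈ Finset.range n,
      (((0 + j + 1 : ℕ) : ℂ) - i) = ((j : ℂ) + ((1 : ℂ) - i)) := by
    intro i _; push_cast; ring
  rw [Finset.prod_congr rfl h1, Finset.prod_congr rfl h2, pow_mul]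
  norm_num

lemma Rpoly_symm (w k n : ℕ) (h : 2 * k + 1 = w + n) (x : ℂ) :
    (Rpoly k n).eval (-x - w - 2) = (-1 : ℂ) ^ n * (Rpoly k n).eval x := by
  have hc : (2 * (k : ℂ) + 1) = (w : ℂ) + n := by exact_mod_cast congrArg (Nat.cast : ℕ → ℂ) h
  unfold Rpoly
  simp only [eval_add, eval_prod, eval_X, eval_C]
  have e1 : ∏ i ∈ Finset.range n, ((-x - w - 2) + ((2 * k + 1 : ℂ) - i))
      = (-1 : ℂ) ^ n * ∏ i ∈ Finset.range n, (x + ((1 : ℂ) - i)) := by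
    have step : ∀ i ∈ Finset.range n, ((-x - w - 2) + ((2 * k + 1 : ℂ) - i))
        = (-1 : ℂ) * (x + ((1 : ℂ) - ((n - 1 - i : ℕ) : ℂ))) := by
      intro i hi; rw [Finset.mem_range] at hi
      have hcast : ((n - 1 - i : ℕ) : ℂ) = (n : ℂ) - 1 - i := by
        have h' : (n - 1 - i : ℕ) + (1 + i) = n := by omega
        have h'' := congrArg (Nat.cast : ℕ → ℂ) h'
        push_cast at h''
        linear_combination h''
      rw [hcast, hc]; ring
    rw [Finset.prod_congr rfl step, Finset.prod_mul_distrib, Finset.prod_const]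
    rw [Finset.prod_range_reflect (fun i => x + ((1 : ℂ) - (i : ℕ))) n, Finset.card_range]
  have e2 : ∏ i ∈ Finset.range n, ((-x - w - 2) + ((1 : ℂ) - i))
      = (-1 : ℂ) ^ n * ∏ i ∈ Finset.range n, (x + ((2 * k + 1 : ℂ) - i)) := by
    have step : ∀ i ∈ Finset.range n, ((-x - w - 2) + ((1 : ℂ) - i))
        = (-1 : ℂ) * (x + ((2 * k + 1 : ℂ) - ((n - 1 - i : ℕ) : ℂ))) := by
      intro i hi; rw [Finset.mem_range] at hi
      have hcast : ((n - 1 - i : ℕ) : ℂ) = (n : ℂ) - 1 - i := by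
        have h' : (n - 1 - i : ℕ) + (1 + i) = n := by omega
        have h'' := congrArg (Nat.cast : ℕ → ℂ) h'
        push_cast at h''
        linear_combination h''
      rw [hcast, hc]; ring
    rw [Finset.prod_congr rfl step, Finset.prod_mul_distrib, Finset.prod_const]
    rw [Finset.prod_range_reflect (fun i => x + ((2 * k + 1 : ℂ) - (i : ℕ))) n,
      Finset.card_range]
  rw [e1, e2]; ring

lemma prod_X_add_C_monic (f : ℕ → ℂ) (n : ℕ) :
    (∏ i ∈ Finset.range n, (X + C (f i))).Monic :=
  Polynomial.monic_prod_of_monic _ _ fun _ _ => monic_X_add_C _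

lemma prod_X_add_C_natDegree (f : ℕ → ℂ) (n : ℕ) :
    (∏ i ∈ Finset.range n, (X + C (f i))).natDegree = n := by
  rw [Polynomial.natDegree_prod_of_monic _ _ fun _ _ => monic_X_add_C _]
  simp

lemma Rpoly_natDegree_le (k n : ℕ) : (Rpoly k n).natDegree ≤ n := by
  unfold Rpoly
  refine (Polynomial.natDegree_add_le _ _).trans ?_
  rw [prod_X_add_C_natDegree, prod_X_add_C_natDegree]
  simp

lemma Rpoly_coeff_n (k n : ℕ) : (Rpoly k n).coeff n = 2 := by
  unfold Rpoly
  rw [Polynomial.coeff_add]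
  have c1 : (∏ i ∈ Finset.range n, (X + C ((2 * k + 1 : ℂ) - i))).coeff n = 1 := by
    have d1 := prod_X_add_C_natDegree (fun i => ((2 * k + 1 : ℂ) - i)) n
    have h1 := prod_X_add_C_monic (fun i => ((2 * k + 1 : ℂ) - i)) n
    have := h1.coeff_natDegree
    rw [d1] at this
    exact this
  have c2 : (∏ i ∈ Finset.range n, (X + C ((1 : ℂ) - i))).coeff n = 1 := by
    have d2 := prod_X_add_C_natDegree (fun i => ((1 : ℂ) - i)) n
    have h2 := prod_X_add_C_monic (fun i => ((1 : ℂ) - i)) n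
    have := h2.coeff_natDegree
    rw [d2] at this
    exact this
  rw [c1, c2]
  norm_num

lemma key_inj (w m : ℕ) (hw : 1 ≤ w) (v : Fin (m + 1) → ℂ)
    (hv : ∀ j : Fin (m + 1), ∑ l : Fin (m + 1),
      v l * (Rpoly (w / 2 + l) (2 * l + (2 * (w / 2) + 1 - w))).eval ((j : ℕ) : ℂ) = 0) :
    v = 0 := by
  classical
  set e : ℕ := 2 * (w / 2) + 1 - w with he
  have hwe : w + e = 2 * (w / 2) + 1 := by omega
  have he1 : e ≤ 1 := by omega
  set p : Polynomial ℂ :=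
    ∑ l : Fin (m + 1), C (v l) * Rpoly (w / 2 + l) (2 * l + e) with hp
  have hdeg : p.natDegree ≤ 2 * m + e := by
    refine Polynomial.natDegree_sum_le_of_forall_le _ _ fun l _ => ?_
    refine (Polynomial.natDegree_C_mul_le _ _).trans ?_
    refine (Rpoly_natDegree_le _ _).trans ?_
    have : (l : ℕ) ≤ m := by omega
    omega
  have hevalA : ∀ j : ℕ, j ≤ m → p.eval ((j : ℕ) : ℂ) = 0 := by
    intro j hj
    rw [hp]
    simp only [Polynomial.eval_finset_sum, eval_mul, eval_C]
    exact hv ⟨j, by omega⟩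
  have hevalB : ∀ j : ℕ, j ≤ m → p.eval (-(j : ℂ) - w - 2) = 0 := by
    intro j hj
    rw [hp]
    simp only [Polynomial.eval_finset_sum, eval_mul, eval_C]
    have hstep : ∀ l : Fin (m + 1),
        v l * (Rpoly (w / 2 + l) (2 * l + e)).eval (-(j : ℂ) - w - 2)
        = (-1 : ℂ) ^ e * (v l * (Rpoly (w / 2 + l) (2 * l + e)).eval ((j : ℕ) : ℂ)) := by
      intro l
      rw [Rpoly_symm w (w / 2 + l) (2 * l + e) (by omega) ((j : ℕ) : ℂ)]
      rw [pow_add, pow_mul, neg_one_sq, one_pow, one_mul]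
      ring
    rw [Finset.sum_congr rfl fun l _ => hstep l, ← Finset.mul_sum]
    rw [hv ⟨j, by omega⟩, mul_zero]
  -- root sets
  set A : Finset ℂ := (Finset.range (m + 1)).image (fun j : ℕ => (j : ℂ)) with hA
  set B : Finset ℂ := (Finset.range (m + 1)).image (fun j : ℕ => -(j : ℂ) - w - 2) with hB
  have hAcard : A.card = m + 1 := by
    rw [hA, Finset.card_image_of_injective _ Nat.cast_injective, Finset.card_range]
  have hBinj : Function.Injective (fun j : ℕ => -(j : ℂ) - w - 2) := by
    intro a b hab
    simp only at hab
    have : ((a : ℕ) : ℂ) = ((b : ℕ) : ℂ) := by linear_combination -hab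
    exact_mod_cast this
  have hBcard : B.card = m + 1 := by
    rw [hB, Finset.card_image_of_injective _ hBinj, Finset.card_range]
  have hdisj : Disjoint A B := by
    rw [Finset.disjoint_left]
    intro x hxA hxB
    rw [hA, Finset.mem_image] at hxA
    rw [hB, Finset.mem_image] at hxB
    obtain ⟨a, _, rfl⟩ := hxA
    obtain ⟨b, _, hb⟩ := hxB
    have h0 : ((b + w + 2 + a : ℕ) : ℂ) = 0 := by push_cast; linear_combination -hb
    have h1 : b + w + 2 + a = 0 := by exact_mod_cast h0
    omega
  have hzero : p = 0 := by
    refine Polynomial.eq_zero_of_natDegree_lt_card_of_eval_eq_zero' p (A ∪ B) ?_ ?_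
    · intro x hx
      rcases Finset.mem_union.mp hx with hx | hx
      · rw [hA, Finset.mem_image] at hx
        obtain ⟨j, hj, rfl⟩ := hx
        exact hevalA j (Nat.lt_succ_iff.mp (Finset.mem_range.mp hj))
      · rw [hB, Finset.mem_image] at hx
        obtain ⟨j, hj, rfl⟩ := hx
        exact hevalB j (Nat.lt_succ_iff.mp (Finset.mem_range.mp hj))
    · rw [Finset.card_union_of_disjoint hdisj, hAcard, hBcard]
      omega
  -- conclude v = 0
  by_contra hvne
  set T : Finset (Fin (m + 1)) :=
    (Finset.univ : Finset (Fin (m + 1))).filter (fun l => v l ≠ 0) with hT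
  have hne : T.Nonempty := by
    rcases Function.ne_iff.mp hvne with ⟨l, hl⟩
    exact ⟨l, Finset.mem_filter.mpr ⟨Finset.mem_univ _, hl⟩⟩
  set l0 := T.max' hne with hl0
  have hl0mem := T.max'_mem hne
  have hl0ne : v l0 ≠ 0 := (Finset.mem_filter.mp hl0mem).2
  have hcoeff : p.coeff (2 * l0 + e) = v l0 * 2 := by
    rw [hp, Polynomial.finset_sum_coeff]
    rw [Finset.sum_eq_single l0]
    · rw [Polynomial.coeff_C_mul, Rpoly_coeff_n]
    · intro b _ hb
      rw [Polynomial.coeff_C_mul]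
      rcases eq_or_ne (v b) 0 with hvb | hvb
      · rw [hvb, zero_mul]
      · have hbT : b ∈ T := Finset.mem_filter.mpr ⟨Finset.mem_univ _, hvb⟩
        have hble : b ≤ l0 := Finset.le_max' T b hbT
        have hblt : (b : ℕ) < (l0 : ℕ) := by
          rcases lt_or_eq_of_le hble with h | h
          · exact_mod_cast h
          · exact absurd h hb
        rw [Polynomial.coeff_eq_zero_of_natDegree_lt, mul_zero]
        calc (Rpoly (w / 2 + b) (2 * b + e)).natDegree ≤ 2 * b + e := Rpoly_natDegree_le _ _
          _ < 2 * l0 + e := by omega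
    · intro h
      exact absurd (Finset.mem_univ l0) h
  rw [hzero] at hcoeff
  simp only [Polynomial.coeff_zero] at hcoeff
  have : v l0 = 0 := by
    rcases mul_eq_zero.mp hcoeff.symm with h | h
    · exact h
    · exact absurd h two_ne_zero
  exact hl0ne this

lemma key_bij (w m : ℕ) (hw : 1 ≤ w) (b : Fin (m + 1) → ℂ) :
    ∃! v : Fin (m + 1) → ℂ, ∀ j : Fin (m + 1),
      b j = ∑ l : Fin (m + 1),
        v l * (Rpoly (w / 2 + l) (2 * l + (2 * (w / 2) + 1 - w))).eval ((j : ℕ) : ℂ) := by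
  classical
  set M : Matrix (Fin (m + 1)) (Fin (m + 1)) ℂ := Matrix.of fun j l =>
    (Rpoly (w / 2 + l) (2 * l + (2 * (w / 2) + 1 - w))).eval ((j : ℕ) : ℂ) with hM
  set L : (Fin (m + 1) → ℂ) →ₗ[ℂ] (Fin (m + 1) → ℂ) := M.mulVecLin with hL
  have hLapp : ∀ (v : Fin (m + 1) → ℂ) (j : Fin (m + 1)),
      L v j = ∑ l : Fin (m + 1),
        v l * (Rpoly (w / 2 + l) (2 * l + (2 * (w / 2) + 1 - w))).eval ((j : ℕ) : ℂ) := by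
    intro v j
    simp only [hL, hM, Matrix.mulVecLin_apply, Matrix.mulVec, dotProduct, Matrix.of_apply]
    exact Finset.sum_congr rfl fun l _ => mul_comm _ _
  have hinj : Function.Injective L := by
    rw [← LinearMap.ker_eq_bot, LinearMap.ker_eq_bot']
    intro v hv
    refine key_inj w m hw v fun j => ?_
    rw [← hLapp v j, hv]
    rfl
  have hsurj : Function.Surjective L := LinearMap.injective_iff_surjective.mp hinj
  obtain ⟨v, hv⟩ := hsurj b
  refine ⟨v, ?_, ?_⟩
  · intro j
    rw [← hLapp v j, hv]
  · intro v' hv'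
    apply hinj
    rw [hv]
    funext j
    rw [hLapp v' j, ← hv' j]

/-- Let `W` be the complex vector space with basis `{α_j : j ≥ 0}`, modelled as
`ℕ →₀ ℂ` with `α_j = Finsupp.single j 1`.  Let `φ` be a linear map of weight `w ≥ 1`
with `φ(α_j) = c_j α_{j+w}`, and let `ψ_k` be the maps
`ψ_k(α_j) = λ_{0,2k,j,2k+1−w} α_{j+w}` (the Fourier modes `j^{2k}(2k−w+1)`).
Then the restriction of `φ` to `W_m = span{α_0,…,α_m}` can be written uniquely as a
linear combination of the restrictions of the `ψ_k` with `0 ≤ 2k+1−w ≤ 2m+1`. -/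
theorem weight_map_unique_combination (w m : ℕ) (hw : 1 ≤ w) (c : ℕ → ℂ)
    (φ : (ℕ →₀ ℂ) →ₗ[ℂ] (ℕ →₀ ℂ))
    (hφ : ∀ j : ℕ, φ (Finsupp.single j 1) = c j • Finsupp.single (j + w) 1)
    (ψ : ℕ → ((ℕ →₀ ℂ) →ₗ[ℂ] (ℕ →₀ ℂ)))
    (hψ : ∀ k j : ℕ,
      ψ k (Finsupp.single j 1) = lam 0 (2 * k) j (2 * k + 1 - w) • Finsupp.single (j + w) 1) :
    ∃! t : ℕ → ℂ,
      (∀ k, k ∉ (Finset.range (m + w + 1)).filter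
          (fun k => w ≤ 2 * k + 1 ∧ 2 * k + 1 ≤ 2 * m + 1 + w) → t k = 0) ∧
      ∀ j : ℕ, j ≤ m →
        φ (Finsupp.single j 1) =
          ∑ k ∈ (Finset.range (m + w + 1)).filter
              (fun k => w ≤ 2 * k + 1 ∧ 2 * k + 1 ≤ 2 * m + 1 + w),
            t k • ψ k (Finsupp.single j 1) := by
  classical
  obtain ⟨v, hv, hvuniq⟩ := key_bij w m hw (fun j : Fin (m + 1) => c (j : ℕ))
  obtain ⟨e, he⟩ : ∃ e, e = 2 * (w / 2) + 1 - w := ⟨_, rfl⟩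
  rw [show (2 * (w / 2) + 1 - w) = e from he.symm] at hv hvuniq
  obtain ⟨k0, hk0⟩ : ∃ k0, k0 = w / 2 := ⟨_, rfl⟩
  rw [show (w / 2) = k0 from hk0.symm] at hv hvuniq
  set S : Finset ℕ := (Finset.range (m + w + 1)).filter
      (fun k => w ≤ 2 * k + 1 ∧ 2 * k + 1 ≤ 2 * m + 1 + w) with hS
  have hSmem : ∀ k, k ∈ S ↔ k0 ≤ k ∧ k ≤ k0 + m := by
    intro k
    rw [hS, Finset.mem_filter, Finset.mem_range]
    omega
  have hSimage : S = (Finset.range (m + 1)).image (fun l => k0 + l) := by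
    ext k
    rw [hSmem, Finset.mem_image]
    constructor
    · rintro ⟨h1, h2⟩
      exact ⟨k - k0, Finset.mem_range.mpr (by omega), by omega⟩
    · rintro ⟨l, hl, rfl⟩
      rw [Finset.mem_range] at hl
      omega
  have hadd_inj : Function.Injective (fun l => k0 + l) := fun a b h => by
    simpa using h
  -- translation of the equation at j
  have htrans : ∀ (t : ℕ → ℂ) (j : ℕ), j ≤ m →
      ((φ (Finsupp.single j 1) = ∑ k ∈ S, t k • ψ k (Finsupp.single j 1)) ↔
        c j = ∑ l : Fin (m + 1),
          t (k0 + l) * (Rpoly (k0 + l) (2 * l + e)).eval ((j : ℕ) : ℂ)) := by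
    intro t j hj
    rw [hφ]
    have hterm : ∀ k ∈ S, t k • ψ k (Finsupp.single j 1)
        = (t k * lam 0 (2 * k) j (2 * k + 1 - w)) • Finsupp.single (j + w) (1 : ℂ) := by
      intro k _
      rw [hψ, smul_smul]
    rw [Finset.sum_congr rfl hterm, ← Finset.sum_smul]
    have hne : (Finsupp.single (j + w) (1 : ℂ)) ≠ 0 :=
      fun h => one_ne_zero (Finsupp.single_eq_zero.mp h)
    have hsum : ∑ k ∈ S, t k * lam 0 (2 * k) j (2 * k + 1 - w)
        = ∑ l : Fin (m + 1), t (k0 + l) * (Rpoly (k0 + l) (2 * l + e)).eval ((j : ℕ) : ℂ) := by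
      rw [hSimage, Finset.sum_image (fun a _ b _ h => hadd_inj h)]
      rw [← Fin.sum_univ_eq_sum_range
        (fun l => t (k0 + l) * lam 0 (2 * (k0 + l)) j (2 * (k0 + l) + 1 - w)) (m + 1)]
      refine Finset.sum_congr rfl fun l _ => ?_
      rw [show 2 * (k0 + (l : ℕ)) + 1 - w = 2 * (l : ℕ) + e by omega, lam_eval]
    constructor
    · intro hcj
      have := smul_left_injective ℂ hne hcj
      rw [this, hsum]
    · intro hcj
      rw [hsum, ← hcj]
  set tdef : ℕ → ℂ :=
    (fun k => if hk : k0 ≤ k ∧ k ≤ k0 + m then v ⟨k - k0, by omega⟩ else 0) with htdef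
  have htdefval : ∀ l : Fin (m + 1), tdef (k0 + (l : ℕ)) = v l := by
    intro l
    have hl := l.isLt
    have hcond : k0 ≤ k0 + (l : ℕ) ∧ k0 + (l : ℕ) ≤ k0 + m := ⟨Nat.le_add_right _ _, by omega⟩
    rw [htdef]
    simp only [dif_pos hcond]
    congr 1
    apply Fin.ext
    simp
  have htdef0 : ∀ k, ¬(k0 ≤ k ∧ k ≤ k0 + m) → tdef k = 0 := by
    intro k hk
    rw [htdef]
    exact dif_neg hk
  refine ⟨tdef, ⟨?_, ?_⟩, ?_⟩
  · intro k hk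
    exact htdef0 k (fun h => hk ((hSmem k).mpr h))
  · intro j hj
    rw [htrans tdef j hj]
    have hv' := hv ⟨j, by omega⟩
    simp only [Fin.val_mk] at hv' ⊢
    rw [hv']
    exact Finset.sum_congr rfl fun l _ => by rw [htdefval l]
  · intro t ⟨ht0, hteq⟩
    have hvt : (fun l : Fin (m + 1) => t (k0 + (l : ℕ))) = v := by
      apply hvuniq
      intro j
      exact (htrans t (j : ℕ) (by omega)).mp (hteq (j : ℕ) (by omega))
    funext k
    by_cases hk : k0 ≤ k ∧ k ≤ k0 + m
    · have hfin := congrFun hvt ⟨k - k0, by omega⟩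
      simp only [Fin.val_mk] at hfin
      rw [htdef]
      simp only [dif_pos hk]
      rw [← hfin]
      congr 1
      omega
    · rw [htdef0 k hk]
      exact ht0 k (fun hmem => hk ((hSmem k).mp hmem))
end

section
/- With the setup of the derivation action of U(A) on Sym^d(W): for any f ∈ Sym^d(W), the cyclic U(A)-module M generated by f is spanned by the elements μ·f where μ ranges over elements of U(A) of degree at most d. -/
set_option linter.unusedSectionVars false
set_option maxHeartbeats 1000000



/-- The span of the images in `End(R)` of the monomials of `U(A)` of degree at most `r`,
where each `a ∈ A` acts by the derivation `D a`. The empty product (degree `0`) is the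
identity, corresponding to `1 ∈ U(A)`. -/
noncomputable def Efam {A R : Type*} [NonUnitalRing A] [Module ℂ A]
    [CommRing R] [Algebra ℂ R] (D : A → Derivation ℂ R R) (r : ℕ) :
    Submodule ℂ (R →ₗ[ℂ] R) :=
  Submodule.span ℂ
    {T | ∃ s : ℕ, s ≤ r ∧ ∃ a : Fin s → A,
      T = (List.ofFn fun i => (D (a i)).toLinearMap).prod}


noncomputable section Aux

open Finset

variable {A R : Type*} [NonUnitalRing A] [Module ℂ A]
    [CommRing R] [Algebra ℂ R]
    (W : Submodule ℂ R) (D : A → Derivation ℂ R R) (d : ℕ)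

/-- The operator attached to a monomial word. -/
def OpF (k : ℕ) (a : Fin k → A) : R →ₗ[ℂ] R :=
  (List.ofFn fun i => (D (a i)).toLinearMap).prod

lemma OpF_zero (a : Fin 0 → A) : OpF D 0 a = LinearMap.id := by
  simp [OpF, List.ofFn_zero]
  rfl

lemma OpF_cons (k : ℕ) (c : A) (a : Fin k → A) :
    OpF D (k + 1) (Fin.cons c a) = (D c).toLinearMap ∘ₗ OpF D k a := by
  rw [OpF, List.ofFn_succ]
  simp only [Fin.cons_zero, Fin.cons_succ, List.prod_cons]
  rfl

/-- The function space on `d`-tuples of elements of `W`. -/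
abbrev VV := (Fin d → W) → R

/-- Evaluation of an operator on products of `d` elements of `W`, as a linear map. -/
def piEv : (R →ₗ[ℂ] R) →ₗ[ℂ] VV W d where
  toFun T := fun w => T (∏ i, (w i : R))
  map_add' T T' := rfl
  map_smul' c T := rfl

def Phi (k : ℕ) (a : Fin k → A) : VV W d := piEv W d (OpF D k a)

/-- Product of a list collapsed into an optional element (none for the empty list). -/
def optProd : List A → Option A
  | [] => none
  | c :: l => some ((optProd l).elim c (fun e => c * e))

/-- elementary "state" evaluation. -/
def Psi (g : Fin d → Option A) : VV W d :=
  fun w => ∏ i, (g i).elim ((w i : R)) (fun e => D e (w i))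

def updg (g : Fin d → Option A) (c : A) (i : Fin d) : Fin d → Option A :=
  Function.update g i (some ((g i).elim c (fun e => c * e)))

/-- the state attached to a word `a` and an assignment `φ` of letters to slots. -/
def gf (k : ℕ) (a : Fin k → A) (φ : Fin k → Fin d) : Fin d → Option A :=
  fun i => optProd (((List.finRange k).filter fun j => φ j = i).map a)

def Theta (k : ℕ) (a : Fin k → A) : VV W d :=
  ∑ φ ∈ Finset.univ.filter (fun φ : Fin k → Fin d => Function.Injective φ),
    Psi W D d (gf d k a φ)

end Aux

section Core

variable {A R : Type*} [NonUnitalRing A] [Module ℂ A]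
    [CommRing R] [Algebra ℂ R]
    (W : Submodule ℂ R) (D : A → Derivation ℂ R R) (d : ℕ)

lemma deriv_prod (c : A) {ι : Type*} [DecidableEq ι] (s : Finset ι) (t : ι → R) :
    D c (∏ i ∈ s, t i) = ∑ i ∈ s, D c (t i) * ∏ j ∈ s.erase i, t j := by
  classical
  induction s using Finset.induction_on with
  | empty => simp
  | insert x s hx ih =>
    rw [Finset.prod_insert hx, Derivation.leibniz, smul_eq_mul, smul_eq_mul, ih,
      Finset.sum_insert hx, Finset.erase_insert hx]
    rw [Finset.mul_sum]
    rw [add_comm]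
    congr 1
    · ring_nf
    · apply Finset.sum_congr rfl
      intro i hi
      rw [Finset.erase_insert_of_ne (by rintro rfl; exact hx hi),
        Finset.prod_insert (fun h => hx (Finset.mem_of_mem_erase h))]
      ring

lemma PsiA (hmul : ∀ a b : A, ∀ x ∈ W, D (a * b) x = D a (D b x))
    (g : Fin d → Option A) (c : A) (w : Fin d → W) :
    D c (Psi W D d g w) = ∑ i, Psi W D d (updg d g c i) w := by
  classical
  set t : Fin d → R := fun j => (g j).elim ((w j : R)) (fun e => D e (w j)) with ht
  have hPsi : Psi W D d g w = ∏ j, t j := rfl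
  rw [hPsi, deriv_prod D c]
  apply Finset.sum_congr rfl
  intro i _
  have key : Psi W D d (updg d g c i) w
      = D c (t i) * ∏ j ∈ Finset.univ.erase i, t j := by
    have hfun : (fun j => ((updg d g c i) j).elim ((w j : R)) (fun e => D e (w j)))
        = Function.update t i (D c (t i)) := by
      funext j
      by_cases hj : j = i
      · subst hj
        rw [Function.update_self]
        simp only [updg, Function.update_self, Option.elim]
        cases hgi : g j with
        | none => simp [ht, hgi]
        | some e =>
          simp only [ht, hgi, Option.elim]
          exact hmul c e (w j) (w j).2
      · rw [Function.update_of_ne hj]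
        simp only [updg, Function.update_of_ne hj, ht]
    show (∏ j, ((updg d g c i) j).elim ((w j : R)) (fun e => D e (w j)))
        = D c (t i) * ∏ j ∈ Finset.univ.erase i, t j
    rw [hfun, Finset.prod_update_of_mem (Finset.mem_univ i), ← Finset.erase_eq]
  rw [key]

end Core

section Core2

variable {A R : Type*} [NonUnitalRing A] [Module ℂ A]
    [CommRing R] [Algebra ℂ R]
    (W : Submodule ℂ R) (D : A → Derivation ℂ R R) (d : ℕ)

lemma gf_cons (k : ℕ) (a : Fin k → A) (φ : Fin k → Fin d) (c : A) (i : Fin d) :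
    gf d (k + 1) (Fin.cons c a) (Fin.cons i φ) = updg d (gf d k a φ) c i := by
  classical
  funext i'
  have hrest : ((List.finRange (k + 1)).filter (fun j => (Fin.cons i φ : Fin (k+1) → Fin d) j = i')).map
        ((Fin.cons c a : Fin (k+1) → A))
      = (if i = i' then [c] else []) ++ ((List.finRange k).filter (fun j => φ j = i')).map a := by
    rw [List.finRange_succ, List.filter_cons]
    simp only [Fin.cons_zero, Fin.cons_succ, List.filter_map, List.map_map, Function.comp_def]
    by_cases h : i = i'
    · simp [h]
    · simp [h]
  by_cases h : i = i'
  · subst h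
    simp only [gf, hrest, if_pos rfl, List.singleton_append, updg, Function.update_self]
    rfl
  · simp only [gf, hrest, if_neg h, List.nil_append, updg, Function.update_of_ne (Ne.symm h)]

lemma gf_update (k : ℕ) (a : Fin k → A) {φ : Fin k → Fin d} (hφ : Function.Injective φ)
    (c : A) (j : Fin k) :
    gf d k (Function.update a j (c * a j)) φ = updg d (gf d k a φ) c (φ j) := by
  classical
  funext i'
  by_cases h : φ j = i'
  · subst h
    have hfil : (List.finRange k).filter (fun x => φ x = φ j) = [j] := by
      have hp : (fun x => decide (φ x = φ j)) = fun x => decide (x = j) := by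
        funext x; simp [hφ.eq_iff]
      rw [hp]
      rw [List.filter_eq]
      rw [List.count_eq_one_of_mem (List.nodup_finRange k) (List.mem_finRange j)]
      rfl
    simp only [gf, hfil, List.map_singleton, Function.update_self, updg, optProd]
    rfl
  · simp only [gf, updg, Function.update_of_ne (Ne.symm h)]
    congr 1
    apply List.map_congr_left
    intro x hx
    have hxj : x ≠ j := by
      rintro rfl
      exact h (by simpa using (List.mem_filter.mp hx).2)
    rw [Function.update_of_ne hxj]

end Core2

section Core3

variable {A R : Type*} [NonUnitalRing A] [Module ℂ A]
    [CommRing R] [Algebra ℂ R]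
    (W : Submodule ℂ R) (D : A → Derivation ℂ R R) (d : ℕ)

lemma theta_rec (hmul : ∀ a b : A, ∀ x ∈ W, D (a * b) x = D a (D b x))
    (k : ℕ) (c : A) (a : Fin k → A) (w : Fin d → W) :
    D c (Theta W D d k a w)
      = Theta W D d (k + 1) (Fin.cons c a) w
        + ∑ j : Fin k, Theta W D d k (Function.update a j (c * a j)) w := by
  classical
  have hTheta : ∀ (k' : ℕ) (a' : Fin k' → A), Theta W D d k' a' w
      = ∑ φ ∈ Finset.univ.filter (fun φ : Fin k' → Fin d => Function.Injective φ),
        Psi W D d (gf d k' a' φ) w := by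
    intro k' a'
    rw [Theta, Finset.sum_apply]
  rw [hTheta, map_sum]
  have step1 : ∀ φ ∈ Finset.univ.filter (fun φ : Fin k → Fin d => Function.Injective φ),
      D c (Psi W D d (gf d k a φ) w)
        = (∑ i ∈ Finset.univ.filter (fun i : Fin d => i ∉ Set.range φ),
            Psi W D d (gf d (k+1) (Fin.cons c a) (Fin.cons i φ)) w)
          + ∑ j : Fin k, Psi W D d (gf d k (Function.update a j (c * a j)) φ) w := by
    intro φ hφ
    have hinj : Function.Injective φ := (Finset.mem_filter.mp hφ).2
    rw [PsiA W D d hmul]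
    rw [← Finset.sum_filter_add_sum_filter_not Finset.univ (fun i : Fin d => i ∉ Set.range φ)]
    congr 1
    · apply Finset.sum_congr rfl
      intro i _
      rw [gf_cons]
    · have himg : Finset.univ.filter (fun i : Fin d => ¬ i ∉ Set.range φ)
          = Finset.image φ Finset.univ := by
        ext i
        simp [Set.mem_range]
      rw [himg, Finset.sum_image (fun x _ y _ h => hinj h)]
      apply Finset.sum_congr rfl
      intro j _
      rw [gf_update d k a hinj c j]
  rw [Finset.sum_congr rfl step1, Finset.sum_add_distrib]
  congr 1
  · -- reindex pairs (φ, i ∉ range φ) by Fin.cons i φ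
    rw [hTheta]
    rw [Finset.sum_sigma']
    apply Finset.sum_nbij' (i := fun x => Fin.cons x.2 x.1)
      (j := fun ψ => ⟨fun m => ψ m.succ, ψ 0⟩)
    · rintro ⟨φ, i⟩ hx
      simp only [Finset.mem_sigma, Finset.mem_filter, Finset.mem_univ, true_and] at hx
      simp only [Finset.mem_filter, Finset.mem_univ, true_and]
      exact Fin.cons_injective_iff.mpr ⟨hx.2, hx.1⟩
    · intro ψ hψ
      simp only [Finset.mem_filter, Finset.mem_univ, true_and] at hψ
      simp only [Finset.mem_sigma, Finset.mem_filter, Finset.mem_univ, true_and]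
      constructor
      · exact fun x y h => Fin.succ_injective _ (hψ h)
      · rintro ⟨m, hm⟩
        exact (Fin.succ_ne_zero m) (hψ hm)
    · rintro ⟨φ, i⟩ _
      ext m
      · simp
      · simp
    · intro ψ _
      exact Fin.cons_self_tail ψ
    · rintro ⟨φ, i⟩ _
      rfl
  · rw [Finset.sum_comm]
    apply Finset.sum_congr rfl
    intro j _
    rw [hTheta]

end Core3

section Core4

variable {A R : Type*} [NonUnitalRing A] [Module ℂ A]
    [CommRing R] [Algebra ℂ R]
    (W : Submodule ℂ R) (D : A → Derivation ℂ R R) (d : ℕ)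

lemma theta_vanish (k : ℕ) (hk : d < k) (a : Fin k → A) : Theta W D d k a = 0 := by
  rw [Theta]
  rw [Finset.filter_false_of_mem, Finset.sum_empty]
  intro φ _
  intro hinj
  have := Fintype.card_le_of_injective φ hinj
  simp only [Fintype.card_fin] at this
  omega

lemma theta_zero (a : Fin 0 → A) (b : Fin 0 → A) : Theta W D d 0 a = Phi W D d 0 b := by
  have huniq : (Finset.univ.filter (fun φ : Fin 0 → Fin d => Function.Injective φ))
      = {fun i => i.elim0} := by
    ext φ
    simp only [Finset.mem_filter, Finset.mem_univ, true_and, Finset.mem_singleton]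
    constructor
    · intro _; funext i; exact i.elim0
    · rintro rfl; intro x; exact x.elim0
  funext w
  rw [Theta, Finset.sum_apply, huniq, Finset.sum_singleton]
  have hgf : gf d 0 a (fun i => i.elim0) = fun _ => none := by
    funext i'
    simp only [gf, List.finRange]
    rfl
  rw [hgf]
  show (∏ i, (w i : R)) = Phi W D d 0 b w
  rw [Phi, piEv]
  simp only [LinearMap.coe_mk, AddHom.coe_mk]
  rw [OpF_zero]
  rfl

/-- post-composition with the derivation `D c`, as a linear map on the function space. -/
def Lc (c : A) : VV W d →ₗ[ℂ] VV W d where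
  toFun v := fun w => D c (v w)
  map_add' u v := by funext w; simp
  map_smul' t v := by funext w; simp

lemma Lc_theta (hmul : ∀ a b : A, ∀ x ∈ W, D (a * b) x = D a (D b x))
    (k : ℕ) (c : A) (a : Fin k → A) :
    Lc W D d c (Theta W D d k a)
      = Theta W D d (k + 1) (Fin.cons c a)
        + ∑ j : Fin k, Theta W D d k (Function.update a j (c * a j)) := by
  funext w
  have := theta_rec W D d hmul k c a w
  simp only [Lc, LinearMap.coe_mk, AddHom.coe_mk, Pi.add_apply, Finset.sum_apply]
  exact this

lemma Lc_phi (k : ℕ) (c : A) (a : Fin k → A) :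
    Lc W D d c (Phi W D d k a) = Phi W D d (k + 1) (Fin.cons c a) := by
  funext w
  simp only [Lc, Phi, piEv, LinearMap.coe_mk, AddHom.coe_mk]
  rw [OpF_cons]
  rfl

/-- span of evaluated monomials of length at most `r`. -/
def SPhi (r : ℕ) : Submodule ℂ (VV W d) :=
  Submodule.span ℂ {v | ∃ s, s ≤ r ∧ ∃ a : Fin s → A, v = Phi W D d s a}

def STheta : Submodule ℂ (VV W d) :=
  Submodule.span ℂ {v | ∃ k, ∃ a : Fin k → A, v = Theta W D d k a}

lemma SPhi_mono {r r' : ℕ} (h : r ≤ r') : SPhi W D d r ≤ SPhi W D d r' :=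
  Submodule.span_mono (by rintro v ⟨s, hs, a, rfl⟩; exact ⟨s, hs.trans h, a, rfl⟩)

lemma Lc_SPhi (c : A) (r : ℕ) {v : VV W d} (hv : v ∈ SPhi W D d r) :
    Lc W D d c v ∈ SPhi W D d (r + 1) := by
  have : SPhi W D d r ≤ (SPhi W D d (r+1)).comap (Lc W D d c) := by
    rw [SPhi, Submodule.span_le]
    rintro v ⟨s, hs, a, rfl⟩
    simp only [SetLike.mem_coe, Submodule.mem_comap]
    rw [Lc_phi]
    exact Submodule.subset_span ⟨s + 1, by omega, Fin.cons c a, rfl⟩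
  exact this hv

lemma claim1 (hmul : ∀ a b : A, ∀ x ∈ W, D (a * b) x = D a (D b x)) :
    ∀ (k : ℕ) (a : Fin k → A), Theta W D d k a ∈ SPhi W D d (min k d) := by
  intro k
  induction k with
  | zero =>
    intro a
    rw [theta_zero W D d a a]
    exact Submodule.subset_span ⟨0, by omega, a, rfl⟩
  | succ k ih =>
    intro a
    by_cases hk : k + 1 ≤ d
    · have ha : Fin.cons (a 0) (Fin.tail a) = a := Fin.cons_self_tail a
      rw [← ha]
      have hrec := Lc_theta W D d hmul k (a 0) (Fin.tail a)
      have : Theta W D d (k + 1) (Fin.cons (a 0) (Fin.tail a))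
          = Lc W D d (a 0) (Theta W D d k (Fin.tail a))
            - ∑ j : Fin k, Theta W D d k
                (Function.update (Fin.tail a) j (a 0 * Fin.tail a j)) := by
        rw [hrec]; abel
      rw [this]
      apply sub_mem
      · have h1 := Lc_SPhi W D d (a 0) (min k d) (ih (Fin.tail a))
        exact SPhi_mono W D d (by omega) h1
      · apply Submodule.sum_mem
        intro j _
        exact SPhi_mono W D d (by omega) (ih _)
    · rw [theta_vanish W D d (k+1) (by omega) a]
      exact Submodule.zero_mem _

lemma claim2 (hmul : ∀ a b : A, ∀ x ∈ W, D (a * b) x = D a (D b x)) :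
    ∀ (k : ℕ) (a : Fin k → A), Phi W D d k a ∈ STheta W D d := by
  intro k
  induction k with
  | zero =>
    intro a
    rw [← theta_zero W D d a a]
    exact Submodule.subset_span ⟨0, a, rfl⟩
  | succ k ih =>
    intro a
    have ha : Fin.cons (a 0) (Fin.tail a) = a := Fin.cons_self_tail a
    rw [← ha, ← Lc_phi]
    have hmap : STheta W D d ≤ (STheta W D d).comap (Lc W D d (a 0)) := by
      rw [STheta, Submodule.span_le]
      rintro v ⟨k', a', rfl⟩
      simp only [SetLike.mem_coe, Submodule.mem_comap]
      rw [Lc_theta W D d hmul]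
      apply add_mem
      · exact Submodule.subset_span ⟨k' + 1, _, rfl⟩
      · exact Submodule.sum_mem _ (fun j _ => Submodule.subset_span ⟨k', _, rfl⟩)
    exact hmap (ih (Fin.tail a))

lemma phi_in_SPhi (hmul : ∀ a b : A, ∀ x ∈ W, D (a * b) x = D a (D b x))
    (k : ℕ) (a : Fin k → A) : Phi W D d k a ∈ SPhi W D d d := by
  have h2 := claim2 W D d hmul k a
  have hle : STheta W D d ≤ SPhi W D d d := by
    rw [STheta, Submodule.span_le]
    rintro v ⟨k', a', rfl⟩
    exact SPhi_mono W D d (min_le_right k' d) (claim1 W D d hmul k' a')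
  exact hle h2

end Core4

section Final

variable {A R : Type*} [NonUnitalRing A] [Module ℂ A]
    [CommRing R] [Algebra ℂ R]
    (W : Submodule ℂ R) (D : A → Derivation ℂ R R)

lemma pow_le_span_prod (d : ℕ) :
    (W ^ d : Submodule ℂ R)
      ≤ Submodule.span ℂ {y : R | ∃ w : Fin d → W, y = ∏ i, (w i : R)} := by
  induction d with
  | zero =>
    intro x hx
    rw [pow_zero, Submodule.one_eq_span] at hx
    refine Submodule.span_mono ?_ hx
    rintro y rfl
    exact ⟨fun i => i.elim0, by simp⟩
  | succ d ih =>
    intro x hx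
    rw [pow_succ] at hx
    refine Submodule.mul_induction_on hx ?_ (fun x y hx hy => Submodule.add_mem _ hx hy)
    intro m hm n hn
    have hm' := ih hm
    have : Submodule.span ℂ {y : R | ∃ w : Fin d → W, y = ∏ i, (w i : R)}
        ≤ (Submodule.span ℂ {y : R | ∃ w : Fin (d+1) → W, y = ∏ i, (w i : R)}).comap
            (LinearMap.mulRight ℂ n) := by
      rw [Submodule.span_le]
      rintro y ⟨w, rfl⟩
      simp only [SetLike.mem_coe, Submodule.mem_comap, LinearMap.mulRight_apply]
      apply Submodule.subset_span
      refine ⟨Fin.snoc w ⟨n, hn⟩, ?_⟩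
      rw [Fin.prod_univ_castSucc]
      congr 1
      · apply Finset.prod_congr rfl
        intro i _
        rw [Fin.snoc_castSucc]
      · rw [Fin.snoc_last]
    exact this hm'

/-- Main lemma: every monomial operator agrees on `W ^ d` with an operator of
degree at most `d`. -/
lemma main_lemma (hmul : ∀ a b : A, ∀ x ∈ W, D (a * b) x = D a (D b x)) (d : ℕ)
    (k : ℕ) (a : Fin k → A) :
    ∃ T' ∈ Efam D d, ∀ x ∈ (W ^ d : Submodule ℂ R), OpF D k a x = T' x := by
  classical
  have hmem : Phi W D d k a ∈ Submodule.map (piEv W d) (Efam D d) := by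
    have : Submodule.map (piEv W d) (Efam D d) = SPhi W D d d := by
      rw [Efam, SPhi, Submodule.map_span]
      congr 1
      ext v
      constructor
      · rintro ⟨T, ⟨s, hs, a', rfl⟩, rfl⟩
        exact ⟨s, hs, a', rfl⟩
      · rintro ⟨s, hs, a', rfl⟩
        exact ⟨OpF D s a', ⟨s, hs, a', rfl⟩, rfl⟩
    rw [this]
    exact phi_in_SPhi W D d hmul k a
  obtain ⟨T', hT', hπ⟩ := Submodule.mem_map.mp hmem
  refine ⟨T', hT', ?_⟩
  intro x hx
  have hagree : Set.EqOn (⇑(OpF D k a)) (⇑T') {y : R | ∃ w : Fin d → W, y = ∏ i, (w i : R)} := by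
    rintro y ⟨w, rfl⟩
    exact (congrFun hπ w).symm
  exact LinearMap.eqOn_span hagree (pow_le_span_prod W d hx)

end Final

/-- With the derivation action of `U(A)` on `Sym^d(W)` (modelled as `W ^ d` inside a
commutative `ℂ`-algebra `R`): for any `f ∈ W ^ d`, the cyclic `U(A)`-module generated
by `f` is spanned by the elements `μ · f` with `μ ∈ U(A)` of degree at most `d`. -/
theorem cyclic_module_spanned_by_degree_d {A R : Type*} [NonUnitalRing A] [Module ℂ A]
    [CommRing R] [Algebra ℂ R]
    (W : Submodule ℂ R) (D : A → Derivation ℂ R R)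
    (hW : ∀ a : A, ∀ x ∈ W, D a x ∈ W)
    (hmul : ∀ a b : A, ∀ x ∈ W, D (a * b) x = D a (D b x))
    (d : ℕ) (f : R) (hf : f ∈ W ^ d) :
    Submodule.span ℂ {x : R | ∃ r : ℕ, ∃ T ∈ Efam D r, x = T f} =
      Submodule.span ℂ {x : R | ∃ T ∈ Efam D d, x = T f} := by
  classical
  apply le_antisymm
  · rw [Submodule.span_le]
    rintro x ⟨r, T, hT, rfl⟩
    set evf : (R →ₗ[ℂ] R) →ₗ[ℂ] R :=
      { toFun := fun T => T f, map_add' := fun _ _ => rfl, map_smul' := fun _ _ => rfl } with hevf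
    have hmem : T f ∈ Submodule.map evf (Efam D r) := ⟨T, hT, rfl⟩
    rw [Efam, Submodule.map_span] at hmem
    have hle : Submodule.span ℂ
        (evf '' {T : R →ₗ[ℂ] R | ∃ s : ℕ, s ≤ r ∧ ∃ a : Fin s → A,
          T = (List.ofFn fun i => (D (a i)).toLinearMap).prod})
        ≤ Submodule.span ℂ {x : R | ∃ T ∈ Efam D d, x = T f} := by
      rw [Submodule.span_le]
      rintro y ⟨T₀, ⟨s, _, a, rfl⟩, rfl⟩
      obtain ⟨T', hT', hagr⟩ := main_lemma W D hmul d s a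
      have : evf ((List.ofFn fun i => (D (a i)).toLinearMap).prod) = T' f := by
        show ((List.ofFn fun i => (D (a i)).toLinearMap).prod) f = T' f
        exact hagr f hf
      rw [this]
      exact Submodule.subset_span ⟨T', hT', rfl⟩
    exact hle hmem
  · apply Submodule.span_mono
    rintro x ⟨T, hT, hx⟩
    exact ⟨d, T, hT, hx⟩
end

section
/- Let V_k for k ≥ 0 be copies of the standard O(n)-module ℂⁿ with orthonormal basis {x_{i,k} : i = 1,…,n}. The invariant ring (Sym ⊕_{k≥0} V_k)^{O(n)} is generated as a commutative ℂ-algebra by the quadratics q_{a,b} = Σ_{i=1}^n x_{i,a} x_{i,b} for 0 ≤ a ≤ b. -/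
open MvPolynomial Matrix

namespace WeylFFT

noncomputable section

/-! ### Basic definitions -/

def qq (n : ℕ) (W : Type) (a b : ℕ) : MvPolynomial ((Fin n × ℕ) ⊕ W) ℂ :=
  ∑ i : Fin n, X (Sum.inl (i, a)) * X (Sum.inl (i, b))

def gens (n : ℕ) (W : Type) : W ⊕ ℕ × ℕ → MvPolynomial ((Fin n × ℕ) ⊕ W) ℂ :=
  Sum.elim (fun w => X (Sum.inr w)) (fun ab => qq n W ab.1 ab.2)

def act (n : ℕ) (W : Type) (M : Matrix (Fin n) (Fin n) ℂ) :
    (Fin n × ℕ) ⊕ W → MvPolynomial ((Fin n × ℕ) ⊕ W) ℂ :=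
  Sum.elim (fun ik => ∑ j : Fin n, C (M ik.1 j) * X (Sum.inl (j, ik.2)))
    (fun w => X (Sum.inr w))

def Qv (n : ℕ) (W : Type) (x : ((Fin n × ℕ) ⊕ W) → ℂ) (a b : ℕ) : ℂ :=
  ∑ i : Fin n, x (Sum.inl (i, a)) * x (Sum.inl (i, b))

lemma eval_qq (n : ℕ) (W : Type) (x : ((Fin n × ℕ) ⊕ W) → ℂ) (a b : ℕ) :
    eval x (qq n W a b) = Qv n W x a b := by
  simp [qq, Qv]

/-! ### generalities -/

lemma sum_orth {n : ℕ} {M : Matrix (Fin n) (Fin n) ℂ} (hM : Mᵀ * M = 1)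
    {A : Type*} [CommRing A] (φ : ℂ →+* A) (y z : Fin n → A) :
    ∑ i : Fin n, (∑ j, φ (M i j) * y j) * (∑ l, φ (M i l) * z l)
      = ∑ j, y j * z j := by
  have key : ∀ j l : Fin n, (∑ i, φ (M i j) * φ (M i l)) = φ ((1 : Matrix (Fin n) (Fin n) ℂ) j l) := by
    intro j l
    rw [← hM]
    rw [Matrix.mul_apply]
    rw [map_sum]
    simp [Matrix.transpose_apply]
  calc ∑ i : Fin n, (∑ j, φ (M i j) * y j) * (∑ l, φ (M i l) * z l)
      = ∑ i : Fin n, ∑ j, ∑ l, (φ (M i j) * φ (M i l)) * (y j * z l) := by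
        refine Finset.sum_congr rfl fun i _ => ?_
        rw [Finset.sum_mul_sum]
        refine Finset.sum_congr rfl fun j _ => Finset.sum_congr rfl fun l _ => by ring
    _ = ∑ j, ∑ l, (∑ i : Fin n, φ (M i j) * φ (M i l)) * (y j * z l) := by
        rw [Finset.sum_comm]
        refine Finset.sum_congr rfl fun j _ => ?_
        rw [Finset.sum_comm]
        refine Finset.sum_congr rfl fun l _ => ?_
        rw [Finset.sum_mul]
    _ = ∑ j, ∑ l, (if j = l then 1 else 0) * (y j * z l) := by
        refine Finset.sum_congr rfl fun j _ => Finset.sum_congr rfl fun l _ => ?_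
        rw [key j l, Matrix.one_apply]
        split <;> simp
    _ = ∑ j, y j * z j := by
        refine Finset.sum_congr rfl fun j _ => ?_
        simp

lemma aeval_complex_eq_eval {σ : Type*} (x : σ → ℂ) (p : MvPolynomial σ ℂ) :
    (aeval x p : ℂ) = eval x p := by
  rw [aeval_def, Algebra.algebraMap_self]
  rfl

lemma eval_aeval {σ₁ σ₂ : Type*} (x : σ₂ → ℂ) (f : σ₁ → MvPolynomial σ₂ ℂ)
    (q : MvPolynomial σ₁ ℂ) :
    eval x (aeval f q) = eval (fun v => eval x (f v)) q := by
  have h := MvPolynomial.comp_aeval (f := f) (φ := (aeval x : MvPolynomial σ₂ ℂ →ₐ[ℂ] ℂ))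
  have h2 := congrFun (congrArg (fun (ψ : MvPolynomial σ₁ ℂ →ₐ[ℂ] ℂ) => (ψ : MvPolynomial σ₁ ℂ → ℂ)) h) q
  simp only [AlgHom.comp_apply] at h2
  have hfun : (fun v => (aeval x (f v) : ℂ)) = fun v => eval x (f v) :=
    funext fun v => aeval_complex_eq_eval _ _
  calc eval x (aeval f q) = aeval x (aeval f q) := (aeval_complex_eq_eval _ _).symm
    _ = aeval (fun v => aeval x (f v)) q := h2
    _ = eval (fun v => eval x (f v)) q := by rw [aeval_complex_eq_eval, hfun]

/-! ### block matrices -/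

def blockM {n : ℕ} (M : Matrix (Fin n) (Fin n) ℂ) : Matrix (Fin (n+1)) (Fin (n+1)) ℂ :=
  Matrix.of (fun i j =>
    Fin.cases (Fin.cases (1 : ℂ) (fun _ => 0) j)
      (fun i' => Fin.cases 0 (fun j' => M i' j') j) i)

@[simp] lemma blockM_zero_zero {n : ℕ} (M : Matrix (Fin n) (Fin n) ℂ) :
    blockM M 0 0 = 1 := rfl

@[simp] lemma blockM_zero_succ {n : ℕ} (M : Matrix (Fin n) (Fin n) ℂ) (j : Fin n) :
    blockM M 0 j.succ = 0 := by simp [blockM]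

@[simp] lemma blockM_succ_zero {n : ℕ} (M : Matrix (Fin n) (Fin n) ℂ) (i : Fin n) :
    blockM M i.succ 0 = 0 := by simp [blockM]

@[simp] lemma blockM_succ_succ {n : ℕ} (M : Matrix (Fin n) (Fin n) ℂ) (i j : Fin n) :
    blockM M i.succ j.succ = M i j := by simp [blockM]

lemma blockM_orth {n : ℕ} {M : Matrix (Fin n) (Fin n) ℂ} (hM : Mᵀ * M = 1) :
    (blockM M)ᵀ * blockM M = 1 := by
  have key : ∀ a b, ((blockM M)ᵀ * blockM M) a b = (1 : Matrix (Fin (n+1)) (Fin (n+1)) ℂ) a b := by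
    intro a b
    rw [Matrix.mul_apply]
    simp only [Matrix.transpose_apply]
    rw [Fin.sum_univ_succ]
    induction a using Fin.cases with
    | zero =>
      induction b using Fin.cases with
      | zero => simp [Matrix.one_apply]
      | succ b => simp [Matrix.one_apply, Fin.succ_ne_zero, (Fin.succ_ne_zero b).symm]
    | succ a =>
      induction b using Fin.cases with
      | zero => simp [Matrix.one_apply, Fin.succ_ne_zero]
      | succ b =>
        simp only [blockM_succ_zero, blockM_succ_succ, mul_zero, zero_mul, zero_add]
        have : ∑ i : Fin n, M i a * M i b = (Mᵀ * M) a b := by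
          rw [Matrix.mul_apply]; simp [Matrix.transpose_apply]
        rw [this, hM, Matrix.one_apply, Matrix.one_apply]
        simp [Fin.succ_inj]
  ext a b
  exact key a b

/-! ### the step equivalence -/

def eStep (n : ℕ) (W : Type) : ((Fin (n+1) × ℕ) ⊕ W) ≃ ((Fin n × ℕ) ⊕ (ℕ ⊕ W)) where
  toFun := Sum.elim
    (fun ik => Fin.cases (Sum.inr (Sum.inl ik.2)) (fun i' => Sum.inl (i', ik.2)) ik.1)
    (fun w => Sum.inr (Sum.inr w))
  invFun := Sum.elim (fun ik => Sum.inl (ik.1.succ, ik.2))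
    (Sum.elim (fun k => Sum.inl (0, k)) (fun w => Sum.inr w))
  left_inv := by
    rintro (⟨i, k⟩ | w)
    · induction i using Fin.cases <;> simp
    · simp
  right_inv := by
    rintro (⟨i, k⟩ | (k | w)) <;> simp

@[simp] lemma eStep_inl_zero (n : ℕ) (W : Type) (k : ℕ) :
    eStep n W (Sum.inl (0, k)) = Sum.inr (Sum.inl k) := by simp [eStep]

@[simp] lemma eStep_inl_succ (n : ℕ) (W : Type) (i : Fin n) (k : ℕ) :
    eStep n W (Sum.inl (i.succ, k)) = Sum.inl (i, k) := by simp [eStep]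

@[simp] lemma eStep_inr (n : ℕ) (W : Type) (w : W) :
    eStep n W (Sum.inr w) = Sum.inr (Sum.inr w) := rfl

@[simp] lemma eStep_symm_inl (n : ℕ) (W : Type) (i : Fin n) (k : ℕ) :
    (eStep n W).symm (Sum.inl (i, k)) = Sum.inl (i.succ, k) := rfl

@[simp] lemma eStep_symm_inr_inl (n : ℕ) (W : Type) (k : ℕ) :
    (eStep n W).symm (Sum.inr (Sum.inl k)) = Sum.inl (0, k) := rfl

@[simp] lemma eStep_symm_inr_inr (n : ℕ) (W : Type) (w : W) :
    (eStep n W).symm (Sum.inr (Sum.inr w)) = Sum.inr w := rfl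

lemma step_transfer (n : ℕ) (W : Type) (M : Matrix (Fin n) (Fin n) ℂ)
    (p : MvPolynomial ((Fin (n+1) × ℕ) ⊕ W) ℂ) :
    aeval (act n (ℕ ⊕ W) M) (rename (eStep n W) p)
      = rename (eStep n W) (aeval (act (n+1) W (blockM M)) p) := by
  have hcomp : (aeval (act n (ℕ ⊕ W) M)).comp
      ((rename (eStep n W) : MvPolynomial ((Fin (n+1) × ℕ) ⊕ W) ℂ →ₐ[ℂ]
          MvPolynomial ((Fin n × ℕ) ⊕ (ℕ ⊕ W)) ℂ))
      = (rename (eStep n W)).comp (aeval (act (n+1) W (blockM M))) := by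
    apply MvPolynomial.algHom_ext
    rintro (⟨i, k⟩ | w)
    · simp only [AlgHom.comp_apply, rename_X, aeval_X]
      induction i using Fin.cases with
      | zero =>
        rw [eStep_inl_zero]
        show X (Sum.inr (Sum.inl k)) =
          rename (eStep n W) (∑ j : Fin (n+1), C (blockM M 0 j) * X (Sum.inl (j, k)))
        rw [map_sum, Fin.sum_univ_succ]
        simp
      | succ i =>
        rw [eStep_inl_succ]
        show (∑ j : Fin n, C (M i j) * X (Sum.inl (j, k))) =
          rename (eStep n W) (∑ j : Fin (n+1), C (blockM M i.succ j) * X (Sum.inl (j, k)))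
        rw [map_sum, Fin.sum_univ_succ]
        simp
    · simp only [AlgHom.comp_apply, rename_X, aeval_X, eStep_inr]
      show X (Sum.inr (Sum.inr w)) = rename (eStep n W) (X (Sum.inr w))
      simp
  exact congrFun (congrArg (fun (f : _ →ₐ[ℂ] _) => (f : _ → _)) hcomp) p

/-! ### reflections -/

def reflM (n : ℕ) (v : Fin n → ℂ) : Matrix (Fin n) (Fin n) ℂ :=
  Matrix.of fun i j => (if i = j then (1:ℂ) else 0) - (2 / ∑ k, v k * v k) * v i * v j

lemma reflM_orth {n : ℕ} {v : Fin n → ℂ} (hv : (∑ k, v k * v k) ≠ 0) :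
    (reflM n v)ᵀ * reflM n v = 1 := by
  set c := ∑ k, v k * v k with hc
  set a := 2 / c with ha
  have hac : a * c = 2 := by rw [ha]; field_simp
  ext i j
  rw [Matrix.mul_apply, Matrix.one_apply]
  have expand : ∀ k : Fin n, (reflM n v)ᵀ i k * reflM n v k j
      = ((if k = i then (1:ℂ) else 0) * (if k = j then (1:ℂ) else 0)
        - (if k = i then (1:ℂ) else 0) * (a * v k * v j))
        - ((a * v k * v i) * (if k = j then (1:ℂ) else 0)
          - (a * v k * v i) * (a * v k * v j)) := by
    intro k
    show ((if k = i then (1:ℂ) else 0) - a * v k * v i)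
        * ((if k = j then (1:ℂ) else 0) - a * v k * v j) = _
    ring
  rw [Finset.sum_congr rfl (fun k _ => expand k)]
  rw [Finset.sum_sub_distrib, Finset.sum_sub_distrib, Finset.sum_sub_distrib]
  have h1 : (∑ k : Fin n, (if k = i then (1:ℂ) else 0) * (if k = j then (1:ℂ) else 0))
      = if i = j then 1 else 0 := by
    rw [Finset.sum_eq_single i]
    · simp [eq_comm]
    · intro k _ hk; simp [hk]
    · intro h; exact absurd (Finset.mem_univ i) h
  have h2 : (∑ k : Fin n, (if k = i then (1:ℂ) else 0) * (a * v k * v j)) = a * v i * v j := by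
    rw [Finset.sum_eq_single i]
    · simp
    · intro k _ hk; simp [hk]
    · intro h; exact absurd (Finset.mem_univ i) h
  have h3 : (∑ k : Fin n, (a * v k * v i) * (if k = j then (1:ℂ) else 0)) = a * v j * v i := by
    rw [Finset.sum_eq_single j]
    · simp
    · intro k _ hk; simp [hk]
    · intro h; exact absurd (Finset.mem_univ j) h
  have h4 : (∑ k : Fin n, (a * v k * v i) * (a * v k * v j)) = a * a * c * v i * v j := by
    have : ∀ k : Fin n, (a * v k * v i) * (a * v k * v j)
        = (v k * v k) * (a * a * v i * v j) := by intro k; ring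
    rw [Finset.sum_congr rfl (fun k _ => this k), ← Finset.sum_mul, ← hc]
    ring
  rw [h1, h2, h3, h4]
  have : a * a * c = 2 * a := by rw [mul_assoc, hac]; ring
  rw [this]
  ring

lemma exists_orth_row (n : ℕ) (u : Fin (n+1) → ℂ) (hu : ∑ i, u i * u i = 1) :
    ∃ M : Matrix (Fin (n+1)) (Fin (n+1)) ℂ, Mᵀ * M = 1 ∧ ∀ i, M 0 i = u i := by
  by_cases h0 : u 0 = 1
  · set e0 : Fin (n+1) → ℂ := fun i => if (i : Fin (n+1)) = 0 then 1 else 0 with he0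
    set v : Fin (n+1) → ℂ := fun i => u i + e0 i with hv
    have hvv : (∑ k, v k * v k) = 4 := by
      have : ∀ k : Fin (n+1), v k * v k = u k * u k + (2 * u k) * e0 k + e0 k * e0 k := by
        intro k
        rw [hv, he0]
        by_cases hk : k = 0 <;> simp [hk] <;> ring
      rw [Finset.sum_congr rfl (fun k _ => this k)]
      rw [Finset.sum_add_distrib, Finset.sum_add_distrib, hu]
      have h2 : (∑ k : Fin (n+1), (2 * u k) * e0 k) = 2 := by
        rw [Finset.sum_eq_single 0]
        · simp [he0, h0]
        · intro k _ hk; simp [he0, hk]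
        · intro h; exact absurd (Finset.mem_univ 0) h
      have h3 : (∑ k : Fin (n+1), e0 k * e0 k) = 1 := by
        rw [Finset.sum_eq_single 0]
        · simp [he0]
        · intro k _ hk; simp [he0, hk]
        · intro h; exact absurd (Finset.mem_univ 0) h
      rw [h2, h3]; norm_num
    have hvne : (∑ k, v k * v k) ≠ 0 := by rw [hvv]; norm_num
    refine ⟨(-(reflM (n+1) v))ᵀ, ?_, ?_⟩
    · rw [Matrix.transpose_transpose]
      have heq : (-(reflM (n+1) v)) * (-(reflM (n+1) v))ᵀ = reflM (n+1) v * (reflM (n+1) v)ᵀ := by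
        simp
      rw [heq]
      rw [← Matrix.transpose_transpose (reflM (n+1) v)]
      exact mul_eq_one_comm.mp (by rw [Matrix.transpose_transpose]; exact reflM_orth hvne)
    · intro i
      show -(reflM (n+1) v) i 0 = u i
      show -((if i = (0:Fin (n+1)) then (1:ℂ) else 0) - (2 / ∑ k, v k * v k) * v i * v 0) = u i
      rw [hvv]
      have hv0 : v 0 = 2 := by rw [hv, he0]; simp [h0]; norm_num
      rw [hv0]
      by_cases hi : i = (0 : Fin (n+1))
      · simp [hi, hv, he0, h0]; norm_num
      · simp [hi, hv, he0]; ring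
  · set e0 : Fin (n+1) → ℂ := fun i => if (i : Fin (n+1)) = 0 then 1 else 0 with he0
    set v : Fin (n+1) → ℂ := fun i => u i - e0 i with hv
    have hvv : (∑ k, v k * v k) = 2 - 2 * u 0 := by
      have : ∀ k : Fin (n+1), v k * v k = u k * u k - (2 * u k) * e0 k + e0 k * e0 k := by
        intro k
        rw [hv, he0]
        by_cases hk : k = 0 <;> simp [hk] <;> ring
      rw [Finset.sum_congr rfl (fun k _ => this k)]
      rw [Finset.sum_add_distrib, Finset.sum_sub_distrib, hu]
      have h2 : (∑ k : Fin (n+1), (2 * u k) * e0 k) = 2 * u 0 := by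
        rw [Finset.sum_eq_single 0]
        · simp [he0]
        · intro k _ hk; simp [he0, hk]
        · intro h; exact absurd (Finset.mem_univ 0) h
      have h3 : (∑ k : Fin (n+1), e0 k * e0 k) = 1 := by
        rw [Finset.sum_eq_single 0]
        · simp [he0]
        · intro k _ hk; simp [he0, hk]
        · intro h; exact absurd (Finset.mem_univ 0) h
      rw [h2, h3]; ring
    have hvne : (∑ k, v k * v k) ≠ 0 := by
      rw [hvv]
      intro hcon
      apply h0
      linear_combination -(1/2) * hcon
    refine ⟨(reflM (n+1) v)ᵀ, ?_, ?_⟩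
    · rw [Matrix.transpose_transpose]
      rw [← Matrix.transpose_transpose (reflM (n+1) v)]
      exact mul_eq_one_comm.mp (by rw [Matrix.transpose_transpose]; exact reflM_orth hvne)
    · intro i
      show (if i = (0:Fin (n+1)) then (1:ℂ) else 0) - (2 / ∑ k, v k * v k) * v i * v 0 = u i
      rw [hvv]
      have hv0 : v 0 = u 0 - 1 := by rw [hv, he0]; simp
      rw [hv0]
      have hden : (2:ℂ) - 2 * u 0 ≠ 0 := by
        intro hcon
        apply h0
        linear_combination -(1/2) * hcon
      by_cases hi : i = (0 : Fin (n+1))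
      · rw [hi]
        simp only [if_pos rfl, ↓reduceIte]
        have hvi : v 0 = u 0 - 1 := hv0
        rw [hvi]
        field_simp
        ring
      · simp only [if_neg hi]
        have hvi : v i = u i := by rw [hv, he0]; simp [hi]
        rw [hvi]
        field_simp
        ring

/-! ### the step substitution data -/

def gStep (n : ℕ) (W : Type) : ((ℕ ⊕ W) ⊕ ℕ × ℕ) → MvPolynomial ((Fin (n+1) × ℕ) ⊕ W) ℂ :=
  Sum.elim
    (Sum.elim (fun k => X (Sum.inl (0, k))) (fun w => X (Sum.inr w)))
    (fun ab => ∑ i : Fin n, X (Sum.inl (i.succ, ab.1)) * X (Sum.inl (i.succ, ab.2)))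

def hSub (n : ℕ) (W : Type) (k₀ : ℕ) : ((ℕ ⊕ W) ⊕ ℕ × ℕ) → MvPolynomial ((Fin (n+1) × ℕ) ⊕ W) ℂ :=
  Sum.elim
    (Sum.elim (fun k => qq (n+1) W k₀ k) (fun w => X (Sum.inr w)))
    (fun ab => qq (n+1) W ab.1 ab.2)

def valJ (n : ℕ) (W : Type) (k₀ : ℕ) (x : ((Fin (n+1) × ℕ) ⊕ W) → ℂ) (τ : ℂ) :
    ((ℕ ⊕ W) ⊕ ℕ × ℕ) → ℂ :=
  Sum.elim
    (Sum.elim (fun k => τ⁻¹ * Qv (n+1) W x k₀ k) (fun w => x (Sum.inr w)))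
    (fun ab => Qv (n+1) W x ab.1 ab.2
      - τ⁻¹ * τ⁻¹ * Qv (n+1) W x k₀ ab.1 * Qv (n+1) W x k₀ ab.2)

@[simp] lemma valJ_u (n : ℕ) (W : Type) (k₀ : ℕ) (x : ((Fin (n+1) × ℕ) ⊕ W) → ℂ) (τ : ℂ) (k : ℕ) :
    valJ n W k₀ x τ (Sum.inl (Sum.inl k)) = τ⁻¹ * Qv (n+1) W x k₀ k := rfl

@[simp] lemma valJ_w (n : ℕ) (W : Type) (k₀ : ℕ) (x : ((Fin (n+1) × ℕ) ⊕ W) → ℂ) (τ : ℂ) (w : W) :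
    valJ n W k₀ x τ (Sum.inl (Sum.inr w)) = x (Sum.inr w) := rfl

@[simp] lemma valJ_q (n : ℕ) (W : Type) (k₀ : ℕ) (x : ((Fin (n+1) × ℕ) ⊕ W) → ℂ) (τ : ℂ) (a b : ℕ) :
    valJ n W k₀ x τ (Sum.inr (a, b)) = Qv (n+1) W x a b
      - τ⁻¹ * τ⁻¹ * Qv (n+1) W x k₀ a * Qv (n+1) W x k₀ b := rfl

@[simp] lemma hSub_u (n : ℕ) (W : Type) (k₀ : ℕ) (k : ℕ) :
    hSub n W k₀ (Sum.inl (Sum.inl k)) = qq (n+1) W k₀ k := rfl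

@[simp] lemma hSub_w (n : ℕ) (W : Type) (k₀ : ℕ) (w : W) :
    hSub n W k₀ (Sum.inl (Sum.inr w)) = X (Sum.inr w) := rfl

@[simp] lemma hSub_q (n : ℕ) (W : Type) (k₀ : ℕ) (a b : ℕ) :
    hSub n W k₀ (Sum.inr (a, b)) = qq (n+1) W a b := rfl

/-! ### Claim A : pointwise normal form -/

lemma claimA (n : ℕ) (W : Type) (k₀ : ℕ) (p : MvPolynomial ((Fin (n+1) × ℕ) ⊕ W) ℂ)
    (hp : ∀ M : Matrix (Fin (n+1)) (Fin (n+1)) ℂ, Mᵀ * M = 1 → aeval (act (n+1) W M) p = p)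
    (P : MvPolynomial ((ℕ ⊕ W) ⊕ ℕ × ℕ) ℂ) (hP : aeval (gStep n W) P = p)
    (x : ((Fin (n+1) × ℕ) ⊕ W) → ℂ) (τ : ℂ) (hτ : τ ≠ 0)
    (hτ2 : τ ^ 2 = Qv (n+1) W x k₀ k₀) :
    eval x p = eval (valJ n W k₀ x τ) P := by
  classical
  set u : Fin (n+1) → ℂ := fun i => τ⁻¹ * x (Sum.inl (i, k₀)) with hu_def
  have hu : ∑ i, u i * u i = 1 := by
    have h1 : ∀ i : Fin (n+1), u i * u i
        = τ⁻¹ * τ⁻¹ * (x (Sum.inl (i, k₀)) * x (Sum.inl (i, k₀))) := by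
      intro i; rw [hu_def]; ring
    rw [Finset.sum_congr rfl (fun i _ => h1 i), ← Finset.mul_sum]
    have : (∑ i : Fin (n+1), x (Sum.inl (i, k₀)) * x (Sum.inl (i, k₀))) = τ ^ 2 := by
      rw [hτ2]; rfl
    rw [this]
    field_simp
  obtain ⟨M, hM, hMrow⟩ := exists_orth_row n u hu
  set y : ((Fin (n+1) × ℕ) ⊕ W) → ℂ := fun v => eval x (act (n+1) W M v) with hy_def
  have hy_inl : ∀ (j : Fin (n+1)) (k : ℕ),
      y (Sum.inl (j, k)) = ∑ j' : Fin (n+1), M j j' * x (Sum.inl (j', k)) := by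
    intro j k
    rw [hy_def]
    show eval x (∑ j' : Fin (n+1), C (M j j') * X (Sum.inl (j', k))) = _
    simp
  have hy_inr : ∀ w : W, y (Sum.inr w) = x (Sum.inr w) := by
    intro w
    rw [hy_def]
    show eval x (X (Sum.inr w)) = _
    rw [eval_X]
  have step1 : eval x p = eval y p := by
    conv_lhs => rw [← hp M hM]
    rw [eval_aeval]
  have step2 : eval y p = eval (fun j => eval y (gStep n W j)) P := by
    rw [← hP, eval_aeval]
  have hQfull : ∀ a b : ℕ,
      (∑ i : Fin (n+1), y (Sum.inl (i, a)) * y (Sum.inl (i, b))) = Qv (n+1) W x a b := by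
    intro a b
    have := sum_orth hM (RingHom.id ℂ)
      (fun j => x (Sum.inl (j, a))) (fun j => x (Sum.inl (j, b)))
    simp only [RingHom.id_apply] at this
    calc (∑ i : Fin (n+1), y (Sum.inl (i, a)) * y (Sum.inl (i, b)))
        = ∑ i : Fin (n+1), (∑ j, M i j * x (Sum.inl (j, a))) * (∑ l, M i l * x (Sum.inl (l, b))) := by
          refine Finset.sum_congr rfl fun i _ => ?_
          rw [hy_inl, hy_inl]
      _ = ∑ j : Fin (n+1), x (Sum.inl (j, a)) * x (Sum.inl (j, b)) := this
      _ = Qv (n+1) W x a b := rfl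
  have hy0 : ∀ k : ℕ, y (Sum.inl (0, k)) = τ⁻¹ * Qv (n+1) W x k₀ k := by
    intro k
    rw [hy_inl]
    have : ∀ j' : Fin (n+1), M 0 j' * x (Sum.inl (j', k))
        = τ⁻¹ * (x (Sum.inl (j', k₀)) * x (Sum.inl (j', k))) := by
      intro j'
      rw [hMrow j', hu_def]
      ring
    rw [Finset.sum_congr rfl (fun j' _ => this j'), ← Finset.mul_sum]
    rfl
  have hvals : (fun j => eval y (gStep n W j)) = valJ n W k₀ x τ := by
    funext j
    rcases j with (k | w) | ⟨a, b⟩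
    · show eval y (X (Sum.inl (0, k))) = _
      rw [eval_X, hy0]
      rfl
    · show eval y (X (Sum.inr w)) = _
      rw [eval_X, hy_inr]
      rfl
    · show eval y (∑ i : Fin n, X (Sum.inl (i.succ, a)) * X (Sum.inl (i.succ, b))) = _
      rw [map_sum]
      simp only [_root_.map_mul, eval_X]
      have hsplit := hQfull a b
      rw [Fin.sum_univ_succ] at hsplit
      have : (∑ i : Fin n, y (Sum.inl (i.succ, a)) * y (Sum.inl (i.succ, b)))
          = Qv (n+1) W x a b - y (Sum.inl (0, a)) * y (Sum.inl (0, b)) := by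
        linear_combination hsplit
      rw [this, hy0, hy0]
      show Qv (n+1) W x a b - τ⁻¹ * Qv (n+1) W x k₀ a * (τ⁻¹ * Qv (n+1) W x k₀ b)
          = Qv (n+1) W x a b - τ⁻¹ * τ⁻¹ * Qv (n+1) W x k₀ a * Qv (n+1) W x k₀ b
      ring
  rw [step1, step2, hvals]

/-! ### Clearing denominators -/

lemma clearing (n : ℕ) (W : Type) (k₀ : ℕ) (P : MvPolynomial ((ℕ ⊕ W) ⊕ ℕ × ℕ) ℂ) :
    ∃ (N : ℕ) (Se So : MvPolynomial ((ℕ ⊕ W) ⊕ ℕ × ℕ) ℂ),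
      ∀ (x : ((Fin (n+1) × ℕ) ⊕ W) → ℂ) (τ : ℂ), τ ≠ 0 → τ ^ 2 = Qv (n+1) W x k₀ k₀ →
        (Qv (n+1) W x k₀ k₀) ^ N * eval (valJ n W k₀ x τ) P
          = eval x (aeval (hSub n W k₀) Se) + τ * eval x (aeval (hSub n W k₀) So) := by
  classical
  induction P using MvPolynomial.induction_on with
  | C c =>
    refine ⟨0, C c, 0, ?_⟩
    intro x τ hτ hτ2
    simp
  | add p q hp hq =>
    obtain ⟨N₁, Se₁, So₁, h₁⟩ := hp
    obtain ⟨N₂, Se₂, So₂, h₂⟩ := hq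
    refine ⟨N₁ + N₂,
      X (Sum.inr (k₀, k₀)) ^ N₂ * Se₁ + X (Sum.inr (k₀, k₀)) ^ N₁ * Se₂,
      X (Sum.inr (k₀, k₀)) ^ N₂ * So₁ + X (Sum.inr (k₀, k₀)) ^ N₁ * So₂, ?_⟩
    intro x τ hτ hτ2
    have e₁ := h₁ x τ hτ hτ2
    have e₂ := h₂ x τ hτ hτ2
    simp only [map_add, _root_.map_mul, map_pow, eval_X, aeval_X, hSub_u, hSub_w, hSub_q,
      valJ_u, valJ_w, valJ_q, eval_qq]
    set Q := Qv (n+1) W x k₀ k₀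
    set A := eval (valJ n W k₀ x τ) p
    set B := eval (valJ n W k₀ x τ) q
    set E₁ := eval x (aeval (hSub n W k₀) Se₁)
    set E₂ := eval x (aeval (hSub n W k₀) Se₂)
    set O₁ := eval x (aeval (hSub n W k₀) So₁)
    set O₂ := eval x (aeval (hSub n W k₀) So₂)
    linear_combination (Q ^ N₂) * e₁ + (Q ^ N₁) * e₂
  | mul_X p j hp =>
    obtain ⟨N₁, Se₁, So₁, h₁⟩ := hp
    rcases j with (k | w) | ⟨a, b⟩
    · refine ⟨N₁ + 1,
        X (Sum.inl (Sum.inl k)) * (X (Sum.inr (k₀, k₀)) * So₁),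
        X (Sum.inl (Sum.inl k)) * Se₁, ?_⟩
      intro x τ hτ hτ2
      have e₁ := h₁ x τ hτ hτ2
      simp only [map_add, _root_.map_mul, map_pow, eval_X, aeval_X, hSub_u, hSub_w, hSub_q,
        valJ_u, valJ_w, valJ_q, eval_qq]
      set Q := Qv (n+1) W x k₀ k₀ with hQ
      set Qk := Qv (n+1) W x k₀ k
      set A := eval (valJ n W k₀ x τ) p
      set E₁ := eval x (aeval (hSub n W k₀) Se₁)
      set O₁ := eval x (aeval (hSub n W k₀) So₁)
      have hQτ : Q * τ⁻¹ = τ := by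
        rw [← hτ2]
        field_simp
      calc Q ^ (N₁ + 1) * (A * (τ⁻¹ * Qk))
          = (Q ^ N₁ * A) * ((Q * τ⁻¹) * Qk) := by ring
        _ = (E₁ + τ * O₁) * (τ * Qk) := by rw [e₁, hQτ]
        _ = Qk * ((τ * τ) * O₁) + τ * (Qk * E₁) := by ring
        _ = Qk * (Q * O₁) + τ * (Qk * E₁) := by
            rw [show τ * τ = Q by rw [← hτ2]; ring]
    · refine ⟨N₁, Se₁ * X (Sum.inl (Sum.inr w)), So₁ * X (Sum.inl (Sum.inr w)), ?_⟩
      intro x τ hτ hτ2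
      have e₁ := h₁ x τ hτ hτ2
      simp only [map_add, _root_.map_mul, map_pow, eval_X, aeval_X, hSub_u, hSub_w, hSub_q,
        valJ_u, valJ_w, valJ_q, eval_qq]
      set Q := Qv (n+1) W x k₀ k₀
      set A := eval (valJ n W k₀ x τ) p
      set E₁ := eval x (aeval (hSub n W k₀) Se₁)
      set O₁ := eval x (aeval (hSub n W k₀) So₁)
      linear_combination (x (Sum.inr w)) * e₁
    · refine ⟨N₁ + 1,
        (X (Sum.inr (k₀, k₀)) * X (Sum.inr (a, b))
          - X (Sum.inl (Sum.inl a)) * X (Sum.inl (Sum.inl b))) * Se₁,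
        (X (Sum.inr (k₀, k₀)) * X (Sum.inr (a, b))
          - X (Sum.inl (Sum.inl a)) * X (Sum.inl (Sum.inl b))) * So₁, ?_⟩
      intro x τ hτ hτ2
      have e₁ := h₁ x τ hτ hτ2
      simp only [map_add, _root_.map_mul, map_sub, map_pow, eval_X, aeval_X, hSub_u, hSub_w, hSub_q,
        valJ_u, valJ_w, valJ_q, eval_qq]
      set Q := Qv (n+1) W x k₀ k₀ with hQ
      set Qab := Qv (n+1) W x a b
      set Qa := Qv (n+1) W x k₀ a
      set Qb := Qv (n+1) W x k₀ b
      set A := eval (valJ n W k₀ x τ) p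
      set E₁ := eval x (aeval (hSub n W k₀) Se₁)
      set O₁ := eval x (aeval (hSub n W k₀) So₁)
      have hQv : Q * (τ⁻¹ * τ⁻¹) = 1 := by
        rw [← hτ2]
        field_simp
      have hval : Q * (Qab - τ⁻¹ * τ⁻¹ * Qa * Qb) = Q * Qab - Qa * Qb := by
        calc Q * (Qab - τ⁻¹ * τ⁻¹ * Qa * Qb)
            = Q * Qab - (Q * (τ⁻¹ * τ⁻¹)) * (Qa * Qb) := by ring
          _ = Q * Qab - Qa * Qb := by rw [hQv]; ring
      calc Q ^ (N₁ + 1) * (A * (Qab - τ⁻¹ * τ⁻¹ * Qa * Qb))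
          = (Q ^ N₁ * A) * (Q * (Qab - τ⁻¹ * τ⁻¹ * Qa * Qb)) := by ring
        _ = (E₁ + τ * O₁) * (Q * Qab - Qa * Qb) := by rw [e₁, hval]
        _ = (Q * Qab - Qa * Qb) * E₁ + τ * ((Q * Qab - Qa * Qb) * O₁) := by ring

/-! ### the polynomial identity -/

lemma key_identity (n : ℕ) (W : Type) (k₀ : ℕ) (p : MvPolynomial ((Fin (n+1) × ℕ) ⊕ W) ℂ)
    (hp : ∀ M : Matrix (Fin (n+1)) (Fin (n+1)) ℂ, Mᵀ * M = 1 → aeval (act (n+1) W M) p = p)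
    (P : MvPolynomial ((ℕ ⊕ W) ⊕ ℕ × ℕ) ℂ) (hP : aeval (gStep n W) P = p) :
    ∃ (N : ℕ) (Se : MvPolynomial ((ℕ ⊕ W) ⊕ ℕ × ℕ) ℂ),
      (qq (n+1) W k₀ k₀) ^ N * p = aeval (hSub n W k₀) Se := by
  classical
  obtain ⟨N, Se, So, hcl⟩ := clearing n W k₀ P
  refine ⟨N, Se, ?_⟩
  have hpoint : ∀ x : ((Fin (n+1) × ℕ) ⊕ W) → ℂ, Qv (n+1) W x k₀ k₀ ≠ 0 →
      Qv (n+1) W x k₀ k₀ ^ N * eval x p = eval x (aeval (hSub n W k₀) Se) := by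
    intro x hx
    obtain ⟨τ, hτ2⟩ : ∃ z : ℂ, z ^ 2 = Qv (n+1) W x k₀ k₀ :=
      IsAlgClosed.exists_pow_nat_eq _ two_pos
    have hτ : τ ≠ 0 := by
      intro h
      apply hx
      rw [← hτ2, h]
      ring
    have hτ2' : (-τ) ^ 2 = Qv (n+1) W x k₀ k₀ := by rw [← hτ2]; ring
    have hA := claimA n W k₀ p hp P hP x τ hτ hτ2
    have hA' := claimA n W k₀ p hp P hP x (-τ) (neg_ne_zero.mpr hτ) hτ2'
    have h1 := hcl x τ hτ hτ2
    have h2 := hcl x (-τ) (neg_ne_zero.mpr hτ) hτ2'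
    rw [← hA] at h1
    rw [← hA'] at h2
    linear_combination (1/2 : ℂ) * h1 + (1/2 : ℂ) * h2
  have hall : ∀ x : ((Fin (n+1) × ℕ) ⊕ W) → ℂ,
      eval x (qq (n+1) W k₀ k₀ * ((qq (n+1) W k₀ k₀) ^ N * p - aeval (hSub n W k₀) Se))
        = eval x 0 := by
    intro x
    rw [_root_.map_mul, map_sub, _root_.map_mul, map_pow, eval_qq, map_zero]
    by_cases hx : Qv (n+1) W x k₀ k₀ = 0
    · rw [hx]; ring
    · rw [hpoint x hx]; ring
  have hzero := MvPolynomial.funext hall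
  have hqne : (qq (n+1) W k₀ k₀ : MvPolynomial ((Fin (n+1) × ℕ) ⊕ W) ℂ) ≠ 0 := by
    intro h
    have h2 := congrArg (eval (fun v : ((Fin (n+1) × ℕ) ⊕ W) =>
      if v = Sum.inl ((0 : Fin (n+1)), k₀) then (1:ℂ) else 0)) h
    rw [eval_qq, map_zero] at h2
    have h3 : Qv (n+1) W (fun v : ((Fin (n+1) × ℕ) ⊕ W) =>
        if v = Sum.inl ((0 : Fin (n+1)), k₀) then (1:ℂ) else 0) k₀ k₀ = 1 := by
      show (∑ i : Fin (n+1), _) = (1:ℂ)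
      rw [Finset.sum_eq_single (0 : Fin (n+1))]
      · simp
      · intro i _ hi
        simp [hi]
      · intro h; exact absurd (Finset.mem_univ 0) h
    rw [h3] at h2
    exact one_ne_zero h2
  rcases mul_eq_zero.mp hzero with h | h
  · exact absurd h hqne
  · exact sub_eq_zero.mp h

/-! ### Laplacian machinery -/

def lap (n : ℕ) (W : Type) (k₀ : ℕ) (g : MvPolynomial ((Fin (n+1) × ℕ) ⊕ W) ℂ) :
    MvPolynomial ((Fin (n+1) × ℕ) ⊕ W) ℂ :=
  ∑ i : Fin (n+1), pderiv (Sum.inl (i, k₀)) (pderiv (Sum.inl (i, k₀)) g)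

def gam (n : ℕ) (W : Type) (k₀ : ℕ) (g₁ g₂ : MvPolynomial ((Fin (n+1) × ℕ) ⊕ W) ℂ) :
    MvPolynomial ((Fin (n+1) × ℕ) ⊕ W) ℂ :=
  ∑ i : Fin (n+1), pderiv (Sum.inl (i, k₀)) g₁ * pderiv (Sum.inl (i, k₀)) g₂

lemma pderiv_qq (n : ℕ) (W : Type) (k₀ : ℕ) (i : Fin (n+1)) (a b : ℕ) :
    pderiv (Sum.inl (i, k₀)) (qq (n+1) W a b)
      = (if k₀ = a then X (Sum.inl (i, b)) else 0)
        + (if k₀ = b then X (Sum.inl (i, a)) else 0) := by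
  classical
  rw [qq, map_sum]
  have key : ∀ i' : Fin (n+1),
      pderiv (Sum.inl (i, k₀)) (X (Sum.inl (i', a)) * X (Sum.inl (i', b))
        : MvPolynomial ((Fin (n+1) × ℕ) ⊕ W) ℂ)
      = (if i' = i ∧ a = k₀ then X (Sum.inl (i', b)) else 0)
        + (if i' = i ∧ b = k₀ then X (Sum.inl (i', a)) else 0) := by
    intro i'
    rw [pderiv_mul, pderiv_X, pderiv_X]
    simp only [Pi.single_apply, Sum.inl.injEq, Prod.mk.injEq]
    by_cases h1 : i' = i ∧ a = k₀ <;> by_cases h2 : i' = i ∧ b = k₀ <;>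
      simp [h1, h2, mul_comm]
  rw [Finset.sum_congr rfl (fun i' _ => key i')]
  rw [Finset.sum_add_distrib]
  congr 1
  · by_cases ha : k₀ = a
    · subst ha
      simp
    · have ha' : ¬ (a = k₀) := fun h => ha h.symm
      simp [ha, ha']
  · by_cases hb : k₀ = b
    · subst hb
      simp
    · have hb' : ¬ (b = k₀) := fun h => hb h.symm
      simp [hb, hb']

lemma pderiv_X_inr (n : ℕ) (W : Type) (k₀ : ℕ) (i : Fin (n+1)) (w : W) :
    pderiv (Sum.inl (i, k₀)) ((X (Sum.inr w)) : MvPolynomial ((Fin (n+1) × ℕ) ⊕ W) ℂ) = 0 := by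
  apply pderiv_X_of_ne
  simp

-- closure of the generated subalgebra under gam
lemma gam_mem (n : ℕ) (W : Type) (k₀ : ℕ) (g₁ g₂ : MvPolynomial ((Fin (n+1) × ℕ) ⊕ W) ℂ)
    (h₁ : g₁ ∈ Algebra.adjoin ℂ (Set.range (gens (n+1) W)))
    (h₂ : g₂ ∈ Algebra.adjoin ℂ (Set.range (gens (n+1) W))) :
    gam n W k₀ g₁ g₂ ∈ Algebra.adjoin ℂ (Set.range (gens (n+1) W)) := by
  classical
  set B := Algebra.adjoin ℂ (Set.range (gens (n+1) W)) with hB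
  have hqmem : ∀ s t : ℕ, qq (n+1) W s t ∈ B := fun s t =>
    Algebra.subset_adjoin ⟨Sum.inr (s, t), rfl⟩
  have gam_add_left : ∀ f₁ f₂ h, gam n W k₀ (f₁ + f₂) h = gam n W k₀ f₁ h + gam n W k₀ f₂ h := by
    intro f₁ f₂ h
    unfold gam
    rw [← Finset.sum_add_distrib]
    refine Finset.sum_congr rfl fun i _ => ?_
    rw [map_add]; ring
  have gam_mul_left : ∀ f₁ f₂ h, gam n W k₀ (f₁ * f₂) h
      = f₁ * gam n W k₀ f₂ h + f₂ * gam n W k₀ f₁ h := by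
    intro f₁ f₂ h
    unfold gam
    rw [Finset.mul_sum, Finset.mul_sum, ← Finset.sum_add_distrib]
    refine Finset.sum_congr rfl fun i _ => ?_
    rw [pderiv_mul]; ring
  have gam_C_left : ∀ (c : ℂ) h, gam n W k₀ (C c) h = 0 := by
    intro c h
    unfold gam
    rw [Finset.sum_congr rfl (fun i (_ : i ∈ Finset.univ) => by
      rw [pderiv_C, zero_mul] : ∀ i ∈ Finset.univ, pderiv (Sum.inl (i, k₀)) (C c)
        * pderiv (Sum.inl (i, k₀)) h = 0)]
    exact Finset.sum_const_zero
  have gam_comm : ∀ f h, gam n W k₀ f h = gam n W k₀ h f := by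
    intro f h
    exact Finset.sum_congr rfl fun i _ => mul_comm _ _
  -- generator-generator case
  have hgen : ∀ j j' : W ⊕ ℕ × ℕ, gam n W k₀ (gens (n+1) W j) (gens (n+1) W j') ∈ B := by
    rintro (w | ⟨a, b⟩) j'
    · have : gam n W k₀ (gens (n+1) W (Sum.inl w)) (gens (n+1) W j') = 0 := by
        simp [gam, gens, pderiv_X_inr]
      rw [this]; exact zero_mem B
    · rcases j' with w' | ⟨c, d⟩
      · have : gam n W k₀ (gens (n+1) W (Sum.inr (a,b))) (gens (n+1) W (Sum.inl w')) = 0 := by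
          simp [gam, gens, pderiv_X_inr]
        rw [this]; exact zero_mem B
      · show gam n W k₀ (qq (n+1) W a b) (qq (n+1) W c d) ∈ B
        set e₁ : MvPolynomial ((Fin (n+1) × ℕ) ⊕ W) ℂ := if k₀ = a then 1 else 0 with he₁
        set e₂ : MvPolynomial ((Fin (n+1) × ℕ) ⊕ W) ℂ := if k₀ = b then 1 else 0 with he₂
        set e₃ : MvPolynomial ((Fin (n+1) × ℕ) ⊕ W) ℂ := if k₀ = c then 1 else 0 with he₃
        set e₄ : MvPolynomial ((Fin (n+1) × ℕ) ⊕ W) ℂ := if k₀ = d then 1 else 0 with he₄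
        have expand : gam n W k₀ (qq (n+1) W a b) (qq (n+1) W c d)
            = e₁ * e₃ * qq (n+1) W b d + e₁ * e₄ * qq (n+1) W b c
              + e₂ * e₃ * qq (n+1) W a d + e₂ * e₄ * qq (n+1) W a c := by
          unfold gam
          rw [Finset.sum_congr rfl (fun i _ => by
            rw [pderiv_qq n W k₀ i a b, pderiv_qq n W k₀ i c d])]
          unfold qq
          simp only [Finset.mul_sum]
          rw [← Finset.sum_add_distrib, ← Finset.sum_add_distrib, ← Finset.sum_add_distrib]
          refine Finset.sum_congr rfl fun i _ => ?_
          rw [he₁, he₂, he₃, he₄]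
          split_ifs <;> ring
        rw [expand]
        have hel : ∀ (e : MvPolynomial ((Fin (n+1) × ℕ) ⊕ W) ℂ),
            (e = 1 ∨ e = 0) → e ∈ B := by
          rintro e (rfl | rfl)
          · exact one_mem B
          · exact zero_mem B
        have he₁m : e₁ ∈ B := hel _ (by rw [he₁]; split_ifs; exacts [Or.inl rfl, Or.inr rfl])
        have he₂m : e₂ ∈ B := hel _ (by rw [he₂]; split_ifs; exacts [Or.inl rfl, Or.inr rfl])
        have he₃m : e₃ ∈ B := hel _ (by rw [he₃]; split_ifs; exacts [Or.inl rfl, Or.inr rfl])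
        have he₄m : e₄ ∈ B := hel _ (by rw [he₄]; split_ifs; exacts [Or.inl rfl, Or.inr rfl])
        exact add_mem (add_mem (add_mem
          (mul_mem (mul_mem he₁m he₃m) (hqmem b d))
          (mul_mem (mul_mem he₁m he₄m) (hqmem b c)))
          (mul_mem (mul_mem he₂m he₃m) (hqmem a d)))
          (mul_mem (mul_mem he₂m he₄m) (hqmem a c))
  -- double induction
  refine Algebra.adjoin_induction
    (hx := h₁)
    (mem := fun y hy => ?_)
    (algebraMap := fun r => by rw [show (algebraMap ℂ _ r) = C r from rfl, gam_C_left]; exact zero_mem B)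
    (add := fun y z hy hz py pz => by rw [gam_add_left]; exact add_mem py pz)
    (mul := fun y z hy hz py pz => by
      rw [gam_mul_left]
      exact add_mem (mul_mem hy pz) (mul_mem hz py))
  -- now y ∈ range gens, induct on g₂
  obtain ⟨j, rfl⟩ := hy
  refine Algebra.adjoin_induction
    (hx := h₂)
    (mem := fun z hz => ?_)
    (algebraMap := fun r => by
      rw [gam_comm, show (algebraMap ℂ _ r) = C r from rfl, gam_C_left]; exact zero_mem B)
    (add := fun y' z' hy' hz' py pz => by
      rw [gam_comm, gam_add_left, gam_comm y', gam_comm z']; exact add_mem py pz)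
    (mul := fun y' z' hy' hz' py pz => by
      rw [gam_comm, gam_mul_left, gam_comm y', gam_comm z']
      exact add_mem (mul_mem hy' pz) (mul_mem hz' py))
  obtain ⟨j', rfl⟩ := hz
  exact hgen j j'

lemma lap_mem (n : ℕ) (W : Type) (k₀ : ℕ) (g : MvPolynomial ((Fin (n+1) × ℕ) ⊕ W) ℂ)
    (hg : g ∈ Algebra.adjoin ℂ (Set.range (gens (n+1) W))) :
    lap n W k₀ g ∈ Algebra.adjoin ℂ (Set.range (gens (n+1) W)) := by
  classical
  set B := Algebra.adjoin ℂ (Set.range (gens (n+1) W)) with hB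
  have lap_mul : ∀ f h, lap n W k₀ (f * h)
      = f * lap n W k₀ h + h * lap n W k₀ f + 2 * gam n W k₀ f h := by
    intro f h
    have key : ∀ i : Fin (n+1), pderiv (Sum.inl (i, k₀)) (pderiv (Sum.inl (i, k₀)) (f * h))
        = f * pderiv (Sum.inl (i, k₀)) (pderiv (Sum.inl (i, k₀)) h)
          + h * pderiv (Sum.inl (i, k₀)) (pderiv (Sum.inl (i, k₀)) f)
          + 2 * (pderiv (Sum.inl (i, k₀)) f * pderiv (Sum.inl (i, k₀)) h) := by
      intro i
      rw [pderiv_mul, map_add, pderiv_mul, pderiv_mul]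
      ring
    unfold lap gam
    rw [Finset.sum_congr rfl (fun i _ => key i)]
    rw [Finset.sum_add_distrib, Finset.sum_add_distrib, ← Finset.mul_sum, ← Finset.mul_sum,
      ← Finset.mul_sum]
  refine Algebra.adjoin_induction
    (hx := hg)
    (mem := fun y hy => ?_)
    (algebraMap := fun r => by
      have : lap n W k₀ (algebraMap ℂ _ r) = 0 := by
        show lap n W k₀ (C r) = 0
        simp [lap, pderiv_C]
      rw [this]; exact zero_mem B)
    (add := fun y z hy hz py pz => by
      have : lap n W k₀ (y + z) = lap n W k₀ y + lap n W k₀ z := by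
        simp [lap, Finset.sum_add_distrib]
      rw [this]; exact add_mem py pz)
    (mul := fun y z hy hz py pz => by
      rw [lap_mul]
      exact add_mem (add_mem (mul_mem hy pz) (mul_mem hz py))
        (mul_mem (by
          have h2 : (2 : MvPolynomial ((Fin (n+1) × ℕ) ⊕ W) ℂ) = algebraMap ℂ _ 2 :=
            (map_ofNat (algebraMap ℂ (MvPolynomial ((Fin (n+1) × ℕ) ⊕ W) ℂ)) 2).symm
          rw [h2]; exact Subalgebra.algebraMap_mem B 2) (gam_mem n W k₀ y z hy hz)))
  obtain ⟨j, rfl⟩ := hy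
  rcases j with w | ⟨a, b⟩
  · have : lap n W k₀ (gens (n+1) W (Sum.inl w)) = 0 := by
      simp [lap, gens, pderiv_X_inr]
    rw [this]; exact zero_mem B
  · show lap n W k₀ (qq (n+1) W a b) ∈ B
    unfold lap
    rw [Finset.sum_congr rfl (fun i _ => by rw [pderiv_qq n W k₀ i a b])]
    have key : ∀ i : Fin (n+1),
        pderiv (Sum.inl (i, k₀)) ((if k₀ = a then X (Sum.inl (i, b)) else 0)
          + (if k₀ = b then X (Sum.inl (i, a)) else 0)
          : MvPolynomial ((Fin (n+1) × ℕ) ⊕ W) ℂ)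
        = (if k₀ = a then (if k₀ = b then 1 else 0) else 0)
          + (if k₀ = b then (if k₀ = a then 1 else 0) else 0) := by
      intro i
      rw [map_add, apply_ite (pderiv (Sum.inl (i, k₀))),
        apply_ite (pderiv (Sum.inl (i, k₀))), pderiv_X, pderiv_X]
      by_cases ha : k₀ = a <;> by_cases hb : k₀ = b <;>
        simp [ha, hb, Pi.single_apply, eq_comm]
    rw [Finset.sum_congr rfl (fun i _ => key i), Finset.sum_const]
    apply Subalgebra.nsmul_mem
    apply add_mem <;> (split_ifs <;> first | exact one_mem B | exact zero_mem B)

lemma pderiv_natCast (n : ℕ) (W : Type) (v : (Fin (n+1) × ℕ) ⊕ W) (m : ℕ) :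
    pderiv v ((m : MvPolynomial ((Fin (n+1) × ℕ) ⊕ W) ℂ)) = 0 := by
  rw [← map_natCast (C : ℂ →+* MvPolynomial ((Fin (n+1) × ℕ) ⊕ W) ℂ) m, pderiv_C]

lemma lap_cast_mul (n : ℕ) (W : Type) (k₀ : ℕ) (c : ℕ)
    (h : MvPolynomial ((Fin (n+1) × ℕ) ⊕ W) ℂ) :
    lap n W k₀ ((c : MvPolynomial ((Fin (n+1) × ℕ) ⊕ W) ℂ) * h)
      = (c : MvPolynomial ((Fin (n+1) × ℕ) ⊕ W) ℂ) * lap n W k₀ h := by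
  unfold lap
  rw [Finset.mul_sum]
  refine Finset.sum_congr rfl fun i _ => ?_
  rw [pderiv_mul, pderiv_natCast, zero_mul, zero_add, pderiv_mul, pderiv_natCast,
    zero_mul, zero_add]

lemma lap_q_pow_mul (n : ℕ) (W : Type) (k₀ : ℕ) (N : ℕ)
    (g : MvPolynomial ((Fin (n+1) × ℕ) ⊕ W) ℂ)
    (hg : ∀ i : Fin (n+1), pderiv (Sum.inl (i, k₀)) g = 0) :
    lap n W k₀ ((qq (n+1) W k₀ k₀) ^ (N+1) * g)
      = ((2*(N+1)*((n+1)+2*N) : ℕ) : MvPolynomial ((Fin (n+1) × ℕ) ⊕ W) ℂ)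
        * ((qq (n+1) W k₀ k₀) ^ N * g) := by
  classical
  set q := qq (n+1) W k₀ k₀ with hq
  have hdq : ∀ i : Fin (n+1), pderiv (Sum.inl (i, k₀)) q
      = X (Sum.inl (i, k₀)) + X (Sum.inl (i, k₀)) := by
    intro i
    rw [hq, pderiv_qq]
    simp
  have key : ∀ i : Fin (n+1),
      pderiv (Sum.inl (i, k₀)) (pderiv (Sum.inl (i, k₀)) (q ^ (N+1) * g))
      = ((4*(N+1)*N : ℕ) : MvPolynomial ((Fin (n+1) × ℕ) ⊕ W) ℂ)
          * (q ^ (N-1) * (X (Sum.inl (i, k₀)) * X (Sum.inl (i, k₀)) * g))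
        + ((2*(N+1) : ℕ) : MvPolynomial ((Fin (n+1) × ℕ) ⊕ W) ℂ) * (q ^ N * g) := by
    intro i
    rw [pderiv_mul, hg i, mul_zero, add_zero, pderiv_pow, Nat.add_sub_cancel, hdq i]
    rw [pderiv_mul, hg i, mul_zero, add_zero]
    rw [pderiv_mul, map_add, pderiv_X_self]
    rw [pderiv_mul, pderiv_natCast, zero_mul, zero_add, pderiv_pow, hdq i]
    push_cast
    ring
  unfold lap
  rw [Finset.sum_congr rfl (fun i _ => key i)]
  rw [Finset.sum_add_distrib, Finset.sum_const]
  have hfold : (∑ i : Fin (n+1),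
      ((4*(N+1)*N : ℕ) : MvPolynomial ((Fin (n+1) × ℕ) ⊕ W) ℂ)
        * (q ^ (N-1) * (X (Sum.inl (i, k₀)) * X (Sum.inl (i, k₀)) * g)))
      = ((4*(N+1)*N : ℕ) : MvPolynomial ((Fin (n+1) × ℕ) ⊕ W) ℂ)
        * (q ^ (N-1) * (q * g)) := by
    rw [← Finset.mul_sum]
    congr 1
    rw [← Finset.mul_sum]
    congr 1
    rw [← Finset.sum_mul]
    congr 1
  rw [hfold]
  cases N with
  | zero =>
    rw [nsmul_eq_mul]
    simp only [Finset.card_univ, Fintype.card_fin, Nat.mul_zero, Nat.cast_zero, zero_mul,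
      zero_add]
    push_cast
    ring
  | succ m =>
    have hpow : q ^ (m + 1 - 1) * (q * g) = q ^ (m+1) * g := by
      rw [Nat.add_sub_cancel, pow_succ]
      ring
    rw [hpow, nsmul_eq_mul]
    simp only [Finset.card_univ, Fintype.card_fin]
    push_cast
    ring

lemma lap_iterate (n : ℕ) (W : Type) (k₀ : ℕ) (N : ℕ)
    (g : MvPolynomial ((Fin (n+1) × ℕ) ⊕ W) ℂ)
    (hg : ∀ i : Fin (n+1), pderiv (Sum.inl (i, k₀)) g = 0) :
    ∃ c : ℕ, c ≠ 0 ∧ (lap n W k₀)^[N] ((qq (n+1) W k₀ k₀) ^ N * g)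
      = (c : MvPolynomial ((Fin (n+1) × ℕ) ⊕ W) ℂ) * g := by
  have iter_cast : ∀ (m c : ℕ) (h : MvPolynomial ((Fin (n+1) × ℕ) ⊕ W) ℂ),
      (lap n W k₀)^[m] ((c : MvPolynomial ((Fin (n+1) × ℕ) ⊕ W) ℂ) * h)
        = (c : MvPolynomial ((Fin (n+1) × ℕ) ⊕ W) ℂ) * (lap n W k₀)^[m] h := by
    intro m
    induction m with
    | zero => intro c h; simp
    | succ m' IH =>
      intro c h
      rw [Function.iterate_succ_apply, Function.iterate_succ_apply, lap_cast_mul, IH]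
  induction N with
  | zero =>
    refine ⟨1, one_ne_zero, ?_⟩
    simp
  | succ m IH =>
    obtain ⟨c, hc, hrec⟩ := IH
    refine ⟨2*(m+1)*((n+1)+2*m) * c, by positivity, ?_⟩
    rw [Function.iterate_succ_apply, lap_q_pow_mul n W k₀ m g hg, iter_cast, hrec]
    push_cast
    ring

/-! ### The master theorem -/

theorem master : ∀ (n : ℕ) (W : Type) (p : MvPolynomial ((Fin n × ℕ) ⊕ W) ℂ),
    (∀ M : Matrix (Fin n) (Fin n) ℂ, Mᵀ * M = 1 → aeval (act n W M) p = p) →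
    p ∈ Algebra.adjoin ℂ (Set.range (gens n W)) := by
  intro n
  induction n with
  | zero =>
    intro W p _
    have htop : (⊤ : Subalgebra ℂ (MvPolynomial ((Fin 0 × ℕ) ⊕ W) ℂ))
        ≤ Algebra.adjoin ℂ (Set.range (gens 0 W)) := by
      rw [← MvPolynomial.adjoin_range_X]
      apply Algebra.adjoin_le
      rintro _ ⟨v, rfl⟩
      rcases v with ⟨⟨i, k⟩⟩ | w
      · exact i.elim0
      · exact Algebra.subset_adjoin ⟨Sum.inl w, rfl⟩
    exact htop (by trivial)
  | succ n IH =>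
    intro W p hp
    classical
    obtain ⟨k₀, hk₀⟩ := Infinite.exists_notMem_finset
      (p.vars.image (fun v => Sum.elim (fun ik : Fin (n+1) × ℕ => ik.2) (fun _ => 0) v))
    have hfresh : ∀ i : Fin (n+1), pderiv (Sum.inl (i, k₀)) p = 0 := by
      intro i
      apply pderiv_eq_zero_of_notMem_vars
      intro hm
      exact hk₀ (Finset.mem_image.mpr ⟨_, hm, rfl⟩)
    have hinv' : ∀ M' : Matrix (Fin n) (Fin n) ℂ, M'ᵀ * M' = 1 →
        aeval (act n (ℕ ⊕ W) M') (rename (eStep n W) p) = rename (eStep n W) p := by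
      intro M' hM'
      rw [step_transfer, hp (blockM M') (blockM_orth hM')]
    have hmem := IH (ℕ ⊕ W) (rename (eStep n W) p) hinv'
    have h1 : rename ((eStep n W).symm : _ → _) (rename (eStep n W) p)
        ∈ (Algebra.adjoin ℂ (Set.range (gens n (ℕ ⊕ W)))).map
          (rename ((eStep n W).symm : _ → _)) :=
      ⟨rename (eStep n W) p, hmem, rfl⟩
    rw [AlgHom.map_adjoin] at h1
    have hback : rename ((eStep n W).symm : _ → _) (rename (eStep n W) p) = p := by
      rw [rename_rename]; simp
    rw [hback] at h1
    have himg : (rename ((eStep n W).symm : _ → _) :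
          MvPolynomial ((Fin n × ℕ) ⊕ (ℕ ⊕ W)) ℂ →ₐ[ℂ] MvPolynomial ((Fin (n+1) × ℕ) ⊕ W) ℂ) ''
        (Set.range (gens n (ℕ ⊕ W))) = Set.range (gStep n W) := by
      rw [← Set.range_comp]
      apply congrArg
      funext j
      rcases j with (k | w) | ⟨a, b⟩
      · show rename ((eStep n W).symm : _ → _) (X (Sum.inr (Sum.inl k))) = _
        rw [rename_X]
        rfl
      · show rename ((eStep n W).symm : _ → _) (X (Sum.inr (Sum.inr w))) = _
        rw [rename_X]
        rfl
      · show rename ((eStep n W).symm : _ → _) (qq n (ℕ ⊕ W) a b) = _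
        rw [qq, map_sum]
        show _ = ∑ i : Fin n, X (Sum.inl (i.succ, a)) * X (Sum.inl (i.succ, b))
        refine Finset.sum_congr rfl fun i _ => ?_
        rw [_root_.map_mul, rename_X, rename_X]
        rfl
    rw [himg, Algebra.adjoin_range_eq_range_aeval] at h1
    obtain ⟨P, hP⟩ := h1
    obtain ⟨N, Se, hkey⟩ := key_identity n W k₀ p hp P hP
    obtain ⟨c, hc, hiter⟩ := lap_iterate n W k₀ N p hfresh
    set B := Algebra.adjoin ℂ (Set.range (gens (n+1) W)) with hB
    have hSe_mem : aeval (hSub n W k₀) Se ∈ B := by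
      have hr : aeval (hSub n W k₀) Se ∈ (aeval (hSub n W k₀)).range := ⟨Se, rfl⟩
      rw [← Algebra.adjoin_range_eq_range_aeval] at hr
      refine Algebra.adjoin_mono ?_ hr
      rintro _ ⟨j, rfl⟩
      rcases j with (k | w) | ⟨a, b⟩
      · exact ⟨Sum.inr (k₀, k), rfl⟩
      · exact ⟨Sum.inl w, rfl⟩
      · exact ⟨Sum.inr (a, b), rfl⟩
    have hlapmem : ∀ (m : ℕ) (h : MvPolynomial ((Fin (n+1) × ℕ) ⊕ W) ℂ), h ∈ B →
        (lap n W k₀)^[m] h ∈ B := by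
      intro m
      induction m with
      | zero => intro h hh; exact hh
      | succ m' IHm =>
        intro h hh
        rw [Function.iterate_succ_apply]
        exact IHm _ (lap_mem n W k₀ h hh)
    have hfinal := hlapmem N _ hSe_mem
    rw [← hkey, hiter] at hfinal
    have hcast : ((c : ℕ) : MvPolynomial ((Fin (n+1) × ℕ) ⊕ W) ℂ) * p = ((c : ℕ) : ℂ) • p := by
      rw [← map_natCast (C : ℂ →+* MvPolynomial ((Fin (n+1) × ℕ) ⊕ W) ℂ) c]
      rw [smul_eq_C_mul]
    rw [hcast] at hfinal
    have hcne : ((c : ℕ) : ℂ) ≠ 0 := Nat.cast_ne_zero.mpr hc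
    have := B.smul_mem hfinal (((c : ℕ) : ℂ)⁻¹)
    rwa [smul_smul, inv_mul_cancel₀ hcne, one_smul] at this

/-! ### easy direction -/

lemma aeval_q (n : ℕ) (M : Matrix (Fin n) (Fin n) ℂ) (hM : Mᵀ * M = 1) (a b : ℕ) :
    aeval (fun v : Fin n × ℕ => ∑ i : Fin n, C (M v.1 i) * X (i, v.2))
      (∑ i : Fin n, (X (i, a) * X (i, b) : MvPolynomial (Fin n × ℕ) ℂ))
      = ∑ i : Fin n, X (i, a) * X (i, b) := by
  rw [map_sum]
  simp only [_root_.map_mul, aeval_X]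
  exact sum_orth hM (C : ℂ →+* MvPolynomial (Fin n × ℕ) ℂ)
    (fun j => X (j, a)) (fun j => X (j, b))

lemma easy_dir (n : ℕ) (p : MvPolynomial (Fin n × ℕ) ℂ)
    (hp : p ∈ Algebra.adjoin ℂ
      {q : MvPolynomial (Fin n × ℕ) ℂ |
        ∃ a b : ℕ, a ≤ b ∧ q = ∑ i : Fin n, X (i, a) * X (i, b)})
    (M : Matrix (Fin n) (Fin n) ℂ) (hM : Mᵀ * M = 1) :
    aeval (fun v : Fin n × ℕ => ∑ i : Fin n, C (M v.1 i) * X (i, v.2)) p = p := by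
  set Φ := (aeval (fun v : Fin n × ℕ => ∑ i : Fin n, C (M v.1 i) * X (i, v.2)) :
    MvPolynomial (Fin n × ℕ) ℂ →ₐ[ℂ] MvPolynomial (Fin n × ℕ) ℂ)
  have h := Algebra.adjoin_le (S := AlgHom.equalizer Φ (AlgHom.id ℂ _)) ?_ hp
  · exact h
  · rintro q ⟨a, b, -, rfl⟩
    show Φ _ = _
    exact aeval_q n M hM a b

/-! ### hard direction -/

lemma hard_dir (n : ℕ) (p : MvPolynomial (Fin n × ℕ) ℂ)
    (hp : ∀ M : Matrix (Fin n) (Fin n) ℂ, Mᵀ * M = 1 →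
      aeval (fun v : Fin n × ℕ => ∑ i : Fin n, C (M v.1 i) * X (i, v.2)) p = p) :
    p ∈ Algebra.adjoin ℂ
      {q : MvPolynomial (Fin n × ℕ) ℂ |
        ∃ a b : ℕ, a ≤ b ∧ q = ∑ i : Fin n, X (i, a) * X (i, b)} := by
  classical
  let e : (Fin n × ℕ) ≃ ((Fin n × ℕ) ⊕ PEmpty) :=
    ⟨Sum.inl, Sum.elim id PEmpty.elim, fun v => rfl, fun v => by
      rcases v with v | v
      · rfl
      · exact v.elim⟩
  have hinv : ∀ M : Matrix (Fin n) (Fin n) ℂ, Mᵀ * M = 1 →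
      aeval (act n PEmpty M) (rename e p) = rename e p := by
    intro M hM
    have hcomp : (aeval (act n PEmpty M)).comp
        ((rename e : MvPolynomial (Fin n × ℕ) ℂ →ₐ[ℂ] MvPolynomial ((Fin n × ℕ) ⊕ PEmpty) ℂ))
        = (rename e).comp (aeval (fun v : Fin n × ℕ => ∑ i : Fin n, C (M v.1 i) * X (i, v.2))) := by
      apply MvPolynomial.algHom_ext
      intro ⟨i, k⟩
      simp only [AlgHom.comp_apply, rename_X, aeval_X]
      show act n PEmpty M (Sum.inl (i, k)) = _
      simp only [act, Sum.elim_inl, map_sum, _root_.map_mul, aeval_C, rename_X, algHom_C]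
      rfl
    calc aeval (act n PEmpty M) (rename e p)
        = rename e (aeval (fun v : Fin n × ℕ => ∑ i : Fin n, C (M v.1 i) * X (i, v.2)) p) := by
          have := congrArg (fun f => f p) hcomp
          simpa using this
      _ = rename e p := by rw [hp M hM]
  have hmem := master n PEmpty (rename e p) hinv
  have hback : p = rename e.symm (rename e p) := by
    rw [rename_rename]
    simp
  rw [hback]
  have hmap : rename (e.symm : ((Fin n × ℕ) ⊕ PEmpty) → (Fin n × ℕ)) ''
      (Set.range (gens n PEmpty)) ⊆
      {q : MvPolynomial (Fin n × ℕ) ℂ |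
        ∃ a b : ℕ, a ≤ b ∧ q = ∑ i : Fin n, X (i, a) * X (i, b)} := by
    rintro _ ⟨_, ⟨j, rfl⟩, rfl⟩
    rcases j with w | ⟨a, b⟩
    · exact w.elim
    · show rename e.symm (gens n PEmpty (Sum.inr (a, b))) ∈ _
      have : rename (e.symm : ((Fin n × ℕ) ⊕ PEmpty) → (Fin n × ℕ)) (gens n PEmpty (Sum.inr (a, b)))
          = ∑ i : Fin n, X (i, a) * X (i, b) := by
        simp only [gens, Sum.elim_inr, qq, map_sum, _root_.map_mul, rename_X]
        rfl
      rw [this]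
      by_cases hab : a ≤ b
      · exact ⟨a, b, hab, rfl⟩
      · refine ⟨b, a, le_of_not_ge hab, ?_⟩
        exact Finset.sum_congr rfl fun i _ => mul_comm _ _
  have h1 : rename (e.symm : ((Fin n × ℕ) ⊕ PEmpty) → (Fin n × ℕ)) (rename e p)
      ∈ (Algebra.adjoin ℂ (Set.range (gens n PEmpty))).map
        (rename (e.symm : ((Fin n × ℕ) ⊕ PEmpty) → (Fin n × ℕ))) :=
    ⟨rename e p, hmem, rfl⟩
  rw [AlgHom.map_adjoin] at h1
  exact Algebra.adjoin_mono hmap h1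

end

end WeylFFT

/-- Weyl's first fundamental theorem of invariant theory for `O(n)`:
the ring of invariants of `O(n)` acting diagonally on `Sym ⊕_{k≥0} V_k`
(with each `V_k ≅ ℂⁿ` the standard representation, modelled as the polynomial
ring in variables `x_{i,k}`, `i : Fin n`, `k : ℕ`) is generated as a `ℂ`-algebra
by the quadratics `q_{a,b} = Σ_i x_{i,a} x_{i,b}` for `0 ≤ a ≤ b`.
Here `O(n)` is the group of complex matrices `M` with `Mᵀ * M = 1`, acting by the
algebra automorphism sending `x_{i,k} ↦ Σ_j M i j • x_{j,k}`. -/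
theorem weyl_fft_orthogonal (n : ℕ) (p : MvPolynomial (Fin n × ℕ) ℂ) :
    (∀ M : Matrix (Fin n) (Fin n) ℂ, Mᵀ * M = 1 →
      aeval (fun v : Fin n × ℕ => ∑ i : Fin n, C (M v.1 i) * X (i, v.2)) p = p) ↔
    p ∈ Algebra.adjoin ℂ
      {q : MvPolynomial (Fin n × ℕ) ℂ |
        ∃ a b : ℕ, a ≤ b ∧ q = ∑ i : Fin n, X (i, a) * X (i, b)} :=
  ⟨WeylFFT.hard_dir n p, WeylFFT.easy_dir n p⟩
end

section
/- Let ∂: A → A be the shift-type derivation on the graded spaces A_m of quadratic generators, satisfying ∂(ω_{a,b}) = ω_{a+1,b} + ω_{a,b+1}. Then dim(A_{2m}/∂(A_{2m−1})) = 1 and dim(A_{2m+1}/∂(A_{2m})) = 0 for all m ≥ 1; moreover A_{2m} = ∂²(A_{2m−2}) ⊕ ⟨j^{2m}⟩ where j^{2m} = ω_{0,2m}. -/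
/-- The basis symbol `ω_{a,b} = ω_{b,a}`, modelled in `(ℕ × ℕ) →₀ ℂ` as the
single basis vector indexed by the sorted pair. -/
noncomputable def w (a b : ℕ) : (ℕ × ℕ) →₀ ℂ :=
  Finsupp.single (if a ≤ b then (a, b) else (b, a)) 1

/-- The graded piece `A_m`, the span of `{ω_{a,b} : a + b = m}`. -/
noncomputable def Asp (m : ℕ) : Submodule ℂ ((ℕ × ℕ) →₀ ℂ) :=
  Submodule.span ℂ {x | ∃ a b : ℕ, a + b = m ∧ x = w a b}

lemma w_symm (a b : ℕ) : w a b = w b a := by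
  unfold w
  split_ifs with h1 h2 h2 <;>
    first
      | rfl
      | (congr 1; simp only [Prod.mk.injEq]; omega)
      | omega

lemma mem_Asp {a b n : ℕ} (h : a + b = n) : w a b ∈ Asp n :=
  Submodule.subset_span ⟨a, b, h, rfl⟩

lemma Dw_mem (D : ((ℕ × ℕ) →₀ ℂ) →ₗ[ℂ] ((ℕ × ℕ) →₀ ℂ)) {a b n : ℕ} (h : a + b = n) :
    D (w a b) ∈ Submodule.map D (Asp n) :=
  Submodule.mem_map_of_mem (mem_Asp h)

lemma map_Asp_le (D : ((ℕ × ℕ) →₀ ℂ) →ₗ[ℂ] ((ℕ × ℕ) →₀ ℂ)) {n : ℕ}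
    (T : Submodule ℂ ((ℕ × ℕ) →₀ ℂ)) (h : ∀ a b, a + b = n → D (w a b) ∈ T) :
    Submodule.map D (Asp n) ≤ T := by
  rw [Asp, Submodule.map_span, Submodule.span_le]
  rintro x ⟨y, ⟨a, b, hab, rfl⟩, rfl⟩
  exact h a b hab

lemma Asp_le {n : ℕ} (T : Submodule ℂ ((ℕ × ℕ) →₀ ℂ))
    (h : ∀ a b, a + b = n → w a b ∈ T) : Asp n ≤ T := by
  rw [Asp, Submodule.span_le]
  rintro x ⟨a, b, hab, rfl⟩
  exact h a b hab

lemma keyOdd (D : ((ℕ × ℕ) →₀ ℂ) →ₗ[ℂ] ((ℕ × ℕ) →₀ ℂ))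
    (hD : ∀ a b : ℕ, D (w a b) = w (a + 1) b + w a (b + 1)) (k : ℕ) :
    Submodule.map D (Asp (2 * k)) = Asp (2 * k + 1) := by
  apply le_antisymm
  · apply map_Asp_le
    intro a b hab
    rw [hD]
    exact add_mem (mem_Asp (by omega)) (mem_Asp (by omega))
  · have main : ∀ j, j ≤ k → w (k - j) (k + 1 + j) ∈ Submodule.map D (Asp (2 * k)) := by
      intro j
      induction j with
      | zero =>
        intro _
        have h0 : D (w k k) = (2 : ℂ) • w k (k + 1) := by
          rw [hD, w_symm (k + 1) k, two_smul]
        have h1 : ((2 : ℂ)⁻¹) • D (w k k) ∈ Submodule.map D (Asp (2 * k)) :=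
          Submodule.smul_mem _ _ (Dw_mem D (by omega))
        rw [h0, smul_smul, inv_mul_cancel₀ two_ne_zero, one_smul] at h1
        simpa using h1
      | succ j ih =>
        intro hj
        have h1 := Dw_mem D (show (k - (j + 1)) + (k + 1 + j) = 2 * k by omega)
        rw [hD] at h1
        have h2 := ih (by omega)
        have ha : k - (j + 1) + 1 = k - j := by omega
        rw [← ha] at h2
        have h3 := Submodule.sub_mem _ h1 h2
        rw [add_sub_cancel_left] at h3
        exact h3
    apply Asp_le
    intro a b hab
    rcases le_total a b with h | h
    · have e1 : k - (k - a) = a := by omega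
      have e2 : k + 1 + (k - a) = b := by omega
      have := main (k - a) (by omega)
      rwa [e1, e2] at this
    · rw [w_symm]
      have e1 : k - (k - b) = b := by omega
      have e2 : k + 1 + (k - b) = a := by omega
      have := main (k - b) (by omega)
      rwa [e1, e2] at this

lemma keySup (D : ((ℕ × ℕ) →₀ ℂ) →ₗ[ℂ] ((ℕ × ℕ) →₀ ℂ))
    (hD : ∀ a b : ℕ, D (w a b) = w (a + 1) b + w a (b + 1)) (m : ℕ) :
    Submodule.map D (Asp (2 * m + 1)) ⊔ Submodule.span ℂ {w 0 (2 * m + 2)} =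
      Asp (2 * m + 2) := by
  apply le_antisymm
  · apply sup_le
    · apply map_Asp_le
      intro a b hab
      rw [hD]
      exact add_mem (mem_Asp (by omega)) (mem_Asp (by omega))
    · rw [Submodule.span_le, Set.singleton_subset_iff]
      exact mem_Asp (by omega)
  · set T := Submodule.map D (Asp (2 * m + 1)) ⊔ Submodule.span ℂ {w 0 (2 * m + 2)} with hT
    have main : ∀ j, j ≤ m + 1 → w j (2 * m + 2 - j) ∈ T := by
      intro j
      induction j with
      | zero =>
        intro _
        exact Submodule.mem_sup_right (Submodule.subset_span rfl)
      | succ j ih =>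
        intro hj
        have h1 : D (w j (2 * m + 1 - j)) ∈ T :=
          Submodule.mem_sup_left (Dw_mem D (by omega))
        rw [hD] at h1
        have h2 := ih (by omega)
        have ha : 2 * m + 1 - j + 1 = 2 * m + 2 - j := by omega
        rw [ha] at h1
        have h3 := Submodule.sub_mem _ h1 h2
        rw [add_sub_cancel_right] at h3
        have hb : 2 * m + 2 - (j + 1) = 2 * m + 1 - j := by omega
        rwa [hb]
    apply Asp_le
    intro a b hab
    rcases le_total a b with h | h
    · have e : 2 * m + 2 - a = b := by omega
      have := main a (by omega)
      rwa [e] at this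
    · rw [w_symm]
      have e : 2 * m + 2 - b = a := by omega
      have := main b (by omega)
      rwa [e] at this

/-- The alternating-sign linear functional. -/
noncomputable def Lf : ((ℕ × ℕ) →₀ ℂ) →ₗ[ℂ] ℂ :=
  Finsupp.linearCombination ℂ (fun p : ℕ × ℕ => (-1 : ℂ) ^ p.1)

lemma Lf_w {a b : ℕ} (h : a % 2 = b % 2) : Lf (w a b) = (-1) ^ a := by
  unfold Lf w
  split_ifs with h1
  · simp [Finsupp.linearCombination_single]
  · simp only [Finsupp.linearCombination_single, one_smul]
    rw [neg_one_pow_eq_pow_mod_two, neg_one_pow_eq_pow_mod_two (n := a), h]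

lemma ker_L (D : ((ℕ × ℕ) →₀ ℂ) →ₗ[ℂ] ((ℕ × ℕ) →₀ ℂ))
    (hD : ∀ a b : ℕ, D (w a b) = w (a + 1) b + w a (b + 1)) (m : ℕ) :
    Submodule.map D (Asp (2 * m + 1)) ≤ LinearMap.ker Lf := by
  apply map_Asp_le
  intro a b hab
  rw [LinearMap.mem_ker, hD, map_add, Lf_w (by omega), Lf_w (by omega), pow_succ]
  ring

/-- Let `∂` be the shift-type derivation with `∂(ω_{a,b}) = ω_{a+1,b} + ω_{a,b+1}`.
Then for all `m ≥ 1` (here written with index `m + 1`, so for all `m : ℕ`):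
`dim (A_{2m+2} / ∂(A_{2m+1})) = 1` (i.e. `∂(A_{2m+1})` together with `j^{2m+2} = ω_{0,2m+2}`
spans `A_{2m+2}` and `j^{2m+2} ∉ ∂(A_{2m+1})`),
`dim (A_{2m+3} / ∂(A_{2m+2})) = 0` (i.e. `∂(A_{2m+2}) = A_{2m+3}`), and
`A_{2m+2} = ∂²(A_{2m}) ⊕ ⟨j^{2m+2}⟩`. -/
theorem derivation_grading (D : ((ℕ × ℕ) →₀ ℂ) →ₗ[ℂ] ((ℕ × ℕ) →₀ ℂ))
    (hD : ∀ a b : ℕ, D (w a b) = w (a + 1) b + w a (b + 1)) (m : ℕ) :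
    (Submodule.map D (Asp (2 * m + 1)) ⊔ Submodule.span ℂ {w 0 (2 * m + 2)} =
        Asp (2 * m + 2) ∧
      w 0 (2 * m + 2) ∉ Submodule.map D (Asp (2 * m + 1))) ∧
    Submodule.map D (Asp (2 * m + 2)) = Asp (2 * m + 3) ∧
    (Submodule.map (D ∘ₗ D) (Asp (2 * m)) ⊔ Submodule.span ℂ {w 0 (2 * m + 2)} =
        Asp (2 * m + 2) ∧
      Disjoint (Submodule.map (D ∘ₗ D) (Asp (2 * m)))
        (Submodule.span ℂ {w 0 (2 * m + 2)})) := by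
  have hLf0 : Lf (w 0 (2 * m + 2)) = 1 := by
    rw [Lf_w (by omega), pow_zero]
  have hnonmem : w 0 (2 * m + 2) ∉ Submodule.map D (Asp (2 * m + 1)) := by
    intro h
    have := ker_L D hD m h
    rw [LinearMap.mem_ker, hLf0] at this
    exact one_ne_zero this
  have hDD : Submodule.map (D ∘ₗ D) (Asp (2 * m)) = Submodule.map D (Asp (2 * m + 1)) := by
    rw [Submodule.map_comp, keyOdd D hD m]
  refine ⟨⟨keySup D hD m, hnonmem⟩, ?_, ?_, ?_⟩
  · have h := keyOdd D hD (m + 1)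
    have e1 : 2 * (m + 1) = 2 * m + 2 := by ring
    rwa [e1, show 2 * m + 2 + 1 = 2 * m + 3 from by omega] at h
  · rw [hDD]; exact keySup D hD m
  · rw [hDD, Submodule.disjoint_def]
    intro x hx hxs
    rcases Submodule.mem_span_singleton.1 hxs with ⟨c, rfl⟩
    have hk := ker_L D hD m hx
    rw [LinearMap.mem_ker, map_smul, hLf0, smul_eq_mul, mul_one] at hk
    simp [hk]
end

section
/- In H(n)^{O(n)}, for all j,k,l,m ≥ 0 the zeroth circle product Ω_{j,k} ∘_0 Ω_{l,m} of two quadratic generators is a total derivative (lies in the image of ∂). Concretely, via the OPE formula ω_{a,b} ∘_m ω_{c,d} = λ_{a,b,c,m} ω_{a+b+c+1−m,d} + λ_{a,b,d,m} ω_{c,a+b+d+1−m} with m = 0, every element of A_{2k+2l+1} (odd total degree) is in the image of ∂: A_{2k+2l} → A_{2k+2l+1}. -/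
lemma w_mem (a b m : ℕ) (h : a + b = m) : w a b ∈ Asp m :=
  Submodule.subset_span ⟨a, b, h, rfl⟩

section
variable {D : ((ℕ × ℕ) →₀ ℂ) →ₗ[ℂ] ((ℕ × ℕ) →₀ ℂ)}
  (hD : ∀ a b : ℕ, D (w a b) = w (a + 1) b + w a (b + 1))

include hD

lemma key : ∀ k c : ℕ, w c (c + 2 * k + 1) ∈ Submodule.map D (Asp (2 * (c + k))) := by
  intro k
  induction k with
  | zero =>
    intro c
    have h1 : D (w c c) ∈ Submodule.map D (Asp (2 * (c + 0))) :=
      Submodule.mem_map_of_mem (w_mem c c _ (by ring))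
    have h2 : D (w c c) = (2 : ℂ) • w c (c + 2 * 0 + 1) := by
      rw [hD, w_symm (c + 1) c, show c + 2 * 0 + 1 = c + 1 by ring, two_smul]
    rw [h2] at h1
    have := Submodule.smul_mem _ ((2 : ℂ)⁻¹) h1
    rwa [smul_smul, inv_mul_cancel₀ (by norm_num), one_smul] at this
  | succ k ih =>
    intro c
    have h1 := ih (c + 1)
    have h2 : D (w c (c + 2 * k + 2)) ∈ Submodule.map D (Asp (2 * (c + (k + 1)))) :=
      Submodule.mem_map_of_mem (w_mem _ _ _ (by ring))
    rw [hD] at h2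
    rw [show 2 * (c + 1 + k) = 2 * (c + (k + 1)) by ring,
      show c + 1 + 2 * k + 1 = c + 2 * k + 2 by ring] at h1
    have h3 := Submodule.sub_mem _ h2 h1
    rw [show c + 2 * k + 2 + 1 = c + 2 * (k + 1) + 1 by ring] at h3
    rwa [add_sub_cancel_left] at h3

lemma tele : ∀ k c e : ℕ,
    w c (c + 2 * k + 2 + e) + w (c + 2 * k + 1) (c + e + 1) ∈
      Submodule.map D (Asp (2 * c + 2 * k + 1 + e)) := by
  intro k
  induction k with
  | zero =>
    intro c e
    have h1 : D (w c (c + 1 + e)) ∈ Submodule.map D (Asp (2 * c + 2 * 0 + 1 + e)) :=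
      Submodule.mem_map_of_mem (w_mem _ _ _ (by ring))
    rw [hD] at h1
    have he : w c (c + 2 * 0 + 2 + e) + w (c + 2 * 0 + 1) (c + e + 1) =
        w (c + 1) (c + 1 + e) + w c (c + 1 + e + 1) := by
      rw [show c + 2 * 0 + 2 + e = c + 1 + e + 1 by ring,
        show c + 2 * 0 + 1 = c + 1 by ring, show c + e + 1 = c + 1 + e by ring]
      abel
    rw [he]; exact h1
  | succ k ih =>
    intro c e
    have h1 := ih c (e + 2)
    rw [show 2 * c + 2 * k + 1 + (e + 2) = 2 * c + 2 * (k + 1) + 1 + e by ring,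
      show c + 2 * k + 2 + (e + 2) = c + 2 * (k + 1) + 2 + e by ring,
      show c + (e + 2) + 1 = c + e + 3 by ring] at h1
    have h2 : D (w (c + 2 * k + 1) (c + e + 2)) ∈
        Submodule.map D (Asp (2 * c + 2 * (k + 1) + 1 + e)) :=
      Submodule.mem_map_of_mem (w_mem _ _ _ (by ring))
    have h3 : D (w (c + 2 * k + 2) (c + e + 1)) ∈
        Submodule.map D (Asp (2 * c + 2 * (k + 1) + 1 + e)) :=
      Submodule.mem_map_of_mem (w_mem _ _ _ (by ring))
    rw [hD, show c + 2 * k + 1 + 1 = c + 2 * k + 2 by ring,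
      show c + e + 2 + 1 = c + e + 3 by ring] at h2
    rw [hD, show c + 2 * k + 2 + 1 = c + 2 * (k + 1) + 1 by ring,
      show c + e + 1 + 1 = c + e + 2 by ring] at h3
    have h4 := Submodule.sub_mem _ (Submodule.add_mem _ h1 h3) h2
    have he : w c (c + 2 * (k + 1) + 2 + e) + w (c + 2 * (k + 1) + 1) (c + e + 1) =
        w c (c + 2 * (k + 1) + 2 + e) + w (c + 2 * k + 1) (c + e + 3) +
          (w (c + 2 * (k + 1) + 1) (c + e + 1) + w (c + 2 * k + 2) (c + e + 2)) -
          (w (c + 2 * k + 2) (c + e + 2) + w (c + 2 * k + 1) (c + e + 3)) := by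
      abel
    rwa [← he] at h4

end

/-- In `H(n)^{O(n)}`, the zeroth circle product of two quadratic generators is a
total derivative.  With `∂(ω_{a,b}) = ω_{a+1,b} + ω_{a,b+1}`:
(i) `∂ : A_{2r} → A_{2r+1}` is surjective for every `r ≥ 0`; and
(ii) via the OPE formula `ω_{a,b} ∘_0 ω_{c,d} = λ_{a,b,c,0} ω_{a+b+c+1,d} + λ_{a,b,d,0} ω_{c,a+b+d+1}`,
each such product lies in the image of `∂` (applied to the graded piece of the
appropriate degree). -/
theorem circle_zero_total_derivative
    (D : ((ℕ × ℕ) →₀ ℂ) →ₗ[ℂ] ((ℕ × ℕ) →₀ ℂ))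
    (hD : ∀ a b : ℕ, D (w a b) = w (a + 1) b + w a (b + 1)) :
    (∀ r : ℕ, Submodule.map D (Asp (2 * r)) = Asp (2 * r + 1)) ∧
    (∀ a b c d : ℕ,
      lam a b c 0 • w (a + b + c + 1) d + lam a b d 0 • w c (a + b + d + 1) ∈
        Submodule.map D (Asp (a + b + c + d))) := by
  have hi : ∀ r : ℕ, Submodule.map D (Asp (2 * r)) = Asp (2 * r + 1) := by
    intro r
    apply le_antisymm
    · rw [Submodule.map_le_iff_le_comap, Asp, Submodule.span_le]
      rintro x ⟨a, b, hab, rfl⟩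
      simp only [SetLike.mem_coe, Submodule.mem_comap, hD]
      exact Submodule.add_mem _ (w_mem _ _ _ (by omega)) (w_mem _ _ _ (by omega))
    · rw [Asp, Submodule.span_le]
      rintro x ⟨a, b, hab, rfl⟩
      rcases lt_trichotomy a b with h | h | h
      · obtain ⟨k, hk, hr⟩ : ∃ k, b = a + 2 * k + 1 ∧ r = a + k := by
          refine ⟨(b - a - 1) / 2, by omega, by omega⟩
        subst hk
        have := key hD k a
        rwa [hr]
      · omega
      · obtain ⟨k, hk, hr⟩ : ∃ k, a = b + 2 * k + 1 ∧ r = b + k := by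
          refine ⟨(a - b - 1) / 2, by omega, by omega⟩
        subst hk
        have := key hD k b
        rwa [hr, ← w_symm]
  refine ⟨hi, ?_⟩
  intro a b c d
  have hlam : ∀ x : ℕ, lam a b x 0 = (-1 : ℂ) ^ b + (-1 : ℂ) ^ a := by
    intro x; simp [lam]
  rcases Nat.even_or_odd (a + b) with hab | hab
  · -- a + b even
    have hL : lam a b c 0 = lam a b d 0 := by rw [hlam, hlam]
    rcases Nat.even_or_odd (c + d) with hcd | hcd
    · -- both even: use surjectivity
      obtain ⟨r, hr⟩ : ∃ r, a + b + c + d = 2 * r := by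
        rcases hab with ⟨p, hp⟩; rcases hcd with ⟨q, hq⟩; exact ⟨p + q, by omega⟩
      rw [hr, hi r]
      exact Submodule.add_mem _
        (Submodule.smul_mem _ _ (w_mem _ _ _ (by omega)))
        (Submodule.smul_mem _ _ (w_mem _ _ _ (by omega)))
    · -- c + d odd
      rw [hL, ← smul_add]
      apply Submodule.smul_mem
      rcases lt_trichotomy c d with h | h | h
      · obtain ⟨k, hk⟩ : ∃ k, d = c + 2 * k + 1 := by
          refine ⟨(d - c - 1) / 2, ?_⟩
          rcases hcd with ⟨q, hq⟩; omega
        subst hk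
        have h1 := tele hD k c (a + b)
        rw [show 2 * c + 2 * k + 1 + (a + b) = a + b + c + (c + 2 * k + 1) by ring] at h1
        have he : w (a + b + c + 1) (c + 2 * k + 1) + w c (a + b + (c + 2 * k + 1) + 1) =
            w c (c + 2 * k + 2 + (a + b)) + w (c + 2 * k + 1) (c + (a + b) + 1) := by
          rw [w_symm (a + b + c + 1), show a + b + (c + 2 * k + 1) + 1 = c + 2 * k + 2 + (a + b) by ring,
            show a + b + c + 1 = c + (a + b) + 1 by ring]
          abel
        rw [he]; exact h1
      · rcases hcd with ⟨q, hq⟩; omega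
      · obtain ⟨k, hk⟩ : ∃ k, c = d + 2 * k + 1 := by
          refine ⟨(c - d - 1) / 2, ?_⟩
          rcases hcd with ⟨q, hq⟩; omega
        subst hk
        have h1 := tele hD k d (a + b)
        rw [show 2 * d + 2 * k + 1 + (a + b) = a + b + (d + 2 * k + 1) + d by ring] at h1
        have he : w (a + b + (d + 2 * k + 1) + 1) d + w (d + 2 * k + 1) (a + b + d + 1) =
            w d (d + 2 * k + 2 + (a + b)) + w (d + 2 * k + 1) (d + (a + b) + 1) := by
          rw [w_symm (a + b + (d + 2 * k + 1) + 1),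
            show a + b + (d + 2 * k + 1) + 1 = d + 2 * k + 2 + (a + b) by ring,
            show a + b + d + 1 = d + (a + b) + 1 by ring]
        rw [he]; exact h1
  · -- a + b odd : coefficients vanish
    have hz : (-1 : ℂ) ^ b + (-1 : ℂ) ^ a = 0 := by
      rcases Nat.even_or_odd a with ha | ha
      · have hb : Odd b := by
          rcases hab with ⟨q, hq⟩; rcases ha with ⟨p, hp⟩; exact ⟨q - p, by omega⟩
        rw [ha.neg_one_pow, hb.neg_one_pow]; ring
      · have hb : Even b := by
          rcases hab with ⟨q, hq⟩; rcases ha with ⟨p, hp⟩; exact ⟨q - p, by omega⟩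
        rw [ha.neg_one_pow, hb.neg_one_pow]; ring
    rw [hlam, hlam, hz]
    simp only [zero_smul, add_zero]
    exact Submodule.zero_mem _
end
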